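/- arXiv:1812.06727 — 2 statements merged into one kernel-verified Lean document; each statement's English description precedes it below -/
import Mathlib

section
/- Let γ ∈ (0,1] and let F : [0,1] → K(ℝ^d) be a bounded, γ-Hölder set-valued map with nonempty compact values. Then for any p > 1/γ and any ξ ∈ F(0), there exists a map f : [0,1] → ℝ^d of finite p-variation such that f(t) ∈ F(t) for all 0 ≤ t ≤ 1, f(0) = ξ, and ‖f‖_{p-var,[0,1]} ≤ C_{γ,p} ‖F‖_γ for a constant C_{γ,p} depending only on γ and p. -/
open Set

noncomputable section

/-- A finite partition of the interval `[a, b]`, given by points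
`a = t 0 ≤ t 1 ≤ ⋯ ≤ t n = b`. -/
structure PVarPartition (a b : ℝ) where
  n : ℕ
  t : ℕ → ℝ
  npos : 0 < n
  first : t 0 = a
  last : t n = b
  mono : ∀ i, i < n → t i ≤ t (i + 1)

variable {E : Type*} [NormedAddCommGroup E]

/-- `∑_i ‖y_{t_{i+1}} - y_{t_i}‖^p` along a partition. -/
def pvarSum (p : ℝ) {a b : ℝ} (y : ℝ → E) (P : PVarPartition a b) : ℝ :=
  ∑ i ∈ Finset.range P.n, ‖y (P.t (i + 1)) - y (P.t i)‖ ^ p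

/-- The set of all `p`-variation sums of `y` over partitions of `[a,b]`. -/
def pvarSums (p a b : ℝ) (y : ℝ → E) : Set ℝ :=
  {r | ∃ P : PVarPartition a b, r = pvarSum p y P}

/-- `y` has finite `p`-variation on `[a,b]`. -/
def FinitePVar (p a b : ℝ) (y : ℝ → E) : Prop :=
  BddAbove (pvarSums p a b y)

/-- The `p`-variation seminorm of `y` on `[a,b]`. -/
def pVar (p a b : ℝ) (y : ℝ → E) : ℝ :=
  sSup (pvarSums p a b y) ^ (1 / p)

abbrev Euc (n : ℕ) := EuclideanSpace ℝ (Fin n)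

end

noncomputable section Aux

variable {E : Type*} [NormedAddCommGroup E]

lemma PVarPartition.t_mono_le {a b : ℝ} (P : PVarPartition a b) {i j : ℕ} (hij : i ≤ j) (hj : j ≤ P.n) :
    P.t i ≤ P.t j := by
  induction j with
  | zero =>
      have : i = 0 := Nat.le_zero.mp hij
      simp [this]
  | succ j ih =>
      rcases Nat.eq_or_lt_of_le hij with h | h
      · rw [h]
      · exact (ih (Nat.lt_succ_iff.mp h) (le_trans (Nat.le_succ j) hj)).trans
          (P.mono j (by omega))

lemma PVarPartition.t_mem01 (P : PVarPartition 0 1) {i : ℕ} (hi : i ≤ P.n) : P.t i ∈ Icc (0:ℝ) 1 := by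
  constructor
  · have h := P.t_mono_le (Nat.zero_le i) hi
    rw [P.first] at h; exact h
  · have h := P.t_mono_le hi le_rfl
    rw [P.last] at h; exact h

lemma pvarSum_nonneg (p : ℝ) {a b : ℝ} (y : ℝ → E) (P : PVarPartition a b) : 0 ≤ pvarSum p y P :=
  Finset.sum_nonneg fun _ _ => Real.rpow_nonneg (norm_nonneg _) p

lemma pvarS_add {p : ℝ} (hp : 1 ≤ p) {a b : ℝ} (P : PVarPartition a b) (y z : ℝ → E) :
    pvarSum p (fun t => y t + z t) P ^ (1/p)
      ≤ pvarSum p y P ^ (1/p) + pvarSum p z P ^ (1/p) := by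
  have hp0 : 0 < p := lt_of_lt_of_le one_pos hp
  have h1 : pvarSum p (fun t => y t + z t) P ≤
      ∑ i ∈ Finset.range P.n,
        (‖y (P.t (i+1)) - y (P.t i)‖ + ‖z (P.t (i+1)) - z (P.t i)‖) ^ p := by
    refine Finset.sum_le_sum fun i _ => ?_
    refine Real.rpow_le_rpow (norm_nonneg _) ?_ hp0.le
    have h2 : (y (P.t (i+1)) + z (P.t (i+1))) - (y (P.t i) + z (P.t i))
        = (y (P.t (i+1)) - y (P.t i)) + (z (P.t (i+1)) - z (P.t i)) := by abel
    simpa [h2] using norm_add_le (y (P.t (i+1)) - y (P.t i)) (z (P.t (i+1)) - z (P.t i))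
  calc pvarSum p (fun t => y t + z t) P ^ (1/p)
      ≤ (∑ i ∈ Finset.range P.n,
          (‖y (P.t (i+1)) - y (P.t i)‖ + ‖z (P.t (i+1)) - z (P.t i)‖) ^ p) ^ (1/p) :=
        Real.rpow_le_rpow (pvarSum_nonneg _ _ _) h1 (by positivity)
    _ ≤ _ := Real.Lp_add_le_of_nonneg _ hp (fun i _ => norm_nonneg _) (fun i _ => norm_nonneg _)

lemma pvarS_sum {p : ℝ} (hp : 1 ≤ p) {a b : ℝ} (P : PVarPartition a b) (u : ℕ → ℝ → E) (M : ℕ) :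
    pvarSum p (fun t => ∑ m ∈ Finset.range M, u m t) P ^ (1/p)
      ≤ ∑ m ∈ Finset.range M, pvarSum p (u m) P ^ (1/p) := by
  have hp0 : 0 < p := lt_of_lt_of_le one_pos hp
  induction M with
  | zero =>
      simp [pvarSum, Real.zero_rpow hp0.ne', one_div,
        Real.zero_rpow (inv_ne_zero hp0.ne')]
  | succ M ih =>
      have he : (fun t => ∑ m ∈ Finset.range (M+1), u m t)
          = fun t => (∑ m ∈ Finset.range M, u m t) + u M t := by
        funext t; exact Finset.sum_range_succ _ _
      rw [he, Finset.sum_range_succ]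
      exact le_trans (pvarS_add hp P _ _) (add_le_add_left ih _)

lemma pvar_step {p : ℝ} (hp : 1 ≤ p) (P : PVarPartition 0 1) (N : ℕ) (h : ℕ → E) {c : ℝ} (hc : 0 ≤ c)
    (hb : ∀ j ≤ N, ∀ k ≤ N, ‖h j - h k‖ ≤ c) :
    pvarSum p (fun t => h ⌊(N:ℝ) * t⌋₊) P ≤ N * c ^ p := by
  have hp0 : 0 < p := lt_of_lt_of_le one_pos hp
  set a : ℕ → ℕ := fun i => ⌊(N:ℝ) * P.t i⌋₊ with ha
  have haN : ∀ i, i ≤ P.n → a i ≤ N := by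
    intro i hi
    have h1 : (N:ℝ) * P.t i ≤ (N:ℝ) := by
      have h2 := (P.t_mem01 hi).2
      nlinarith [(Nat.cast_nonneg N : (0:ℝ) ≤ N)]
    calc a i ≤ ⌊(N:ℝ)⌋₊ := Nat.floor_le_floor h1
      _ = N := Nat.floor_natCast N
  have hmono : ∀ i, i < P.n → a i ≤ a (i+1) := by
    intro i hi
    exact Nat.floor_le_floor (mul_le_mul_of_nonneg_left (P.mono i hi) (Nat.cast_nonneg N))
  have key : ∀ i ∈ Finset.range P.n,
      ‖h (a (i+1)) - h (a i)‖ ^ p ≤ c ^ p * ((a (i+1) : ℝ) - a i) := by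
    intro i hi
    rw [Finset.mem_range] at hi
    by_cases he : a (i+1) = a i
    · rw [he]
      simp [Real.zero_rpow hp0.ne']
    · have hle : a i ≤ a (i+1) := hmono i hi
      have h1 : (a i : ℝ) + 1 ≤ (a (i+1) : ℝ) := by
        exact_mod_cast Nat.succ_le_of_lt (lt_of_le_of_ne hle (Ne.symm he))
      have h2 : ‖h (a (i+1)) - h (a i)‖ ^ p ≤ c ^ p :=
        Real.rpow_le_rpow (norm_nonneg _) (hb _ (haN _ hi) _ (haN _ hi.le)) hp0.le
      nlinarith [Real.rpow_nonneg hc p]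
  calc pvarSum p (fun t => h ⌊(N:ℝ) * t⌋₊) P
      ≤ ∑ i ∈ Finset.range P.n, c ^ p * ((a (i+1) : ℝ) - a i) := Finset.sum_le_sum key
    _ = c ^ p * ((a P.n : ℝ) - a 0) := by
        rw [← Finset.mul_sum, Finset.sum_range_sub (fun i => (a i : ℝ))]
    _ = (N:ℝ) * c ^ p := by
        have h0 : a 0 = 0 := by simp [ha, P.first]
        have hn : a P.n = N := by simp [ha, P.last]
        rw [h0, hn]; ring

lemma pvar_unif {p : ℝ} (hp : 1 ≤ p) (P : PVarPartition 0 1) (y : ℝ → E) {ε : ℝ}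
    (hb : ∀ t ∈ Icc (0:ℝ) 1, ‖y t‖ ≤ ε) :
    pvarSum p y P ≤ (P.n : ℝ) * (2 * ε) ^ p := by
  have hp0 : 0 < p := lt_of_lt_of_le one_pos hp
  have key : ∀ i ∈ Finset.range P.n, ‖y (P.t (i+1)) - y (P.t i)‖ ^ p ≤ (2 * ε) ^ p := by
    intro i hi
    rw [Finset.mem_range] at hi
    refine Real.rpow_le_rpow (norm_nonneg _) ?_ hp0.le
    calc ‖y (P.t (i+1)) - y (P.t i)‖ ≤ ‖y (P.t (i+1))‖ + ‖y (P.t i)‖ := norm_sub_le _ _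
      _ ≤ ε + ε := add_le_add (hb _ (P.t_mem01 hi)) (hb _ (P.t_mem01 hi.le))
      _ = 2 * ε := by ring
  calc pvarSum p y P ≤ ∑ _i ∈ Finset.range P.n, (2 * ε) ^ p := Finset.sum_le_sum key
    _ = (P.n : ℝ) * (2 * ε) ^ p := by rw [Finset.sum_const, Finset.card_range, nsmul_eq_mul]

end Aux

set_option maxHeartbeats 4000000 in
/-- **A selection result.**
Let `γ ∈ (0,1]` and `F : [0,1] → K(ℝ^d)` be a bounded, `γ`-Hölder (for the Hausdorff
distance, with constant `KF`) set-valued map with nonempty compact values.  Then for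
any `p > 1/γ` and any `ξ ∈ F(0)` there is a selection `f` of `F` with `f 0 = ξ`, of
finite `p`-variation, with `‖f‖_{p-var,[0,1]} ≤ C_{γ,p} · KF` for a constant `C_{γ,p}`
depending only on `γ` and `p`. -/
theorem selection_with_finite_p_variation
    (γ p : ℝ) (hγ : 0 < γ ∧ γ ≤ 1) (hp : 1 / γ < p) :
    ∃ C : ℝ, 0 ≤ C ∧
      ∀ (d : ℕ) (F : ℝ → Set (Euc d)),
        (∀ t ∈ Icc (0:ℝ) 1, (F t).Nonempty) →
        (∀ t ∈ Icc (0:ℝ) 1, IsCompact (F t)) →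
        (∃ M : ℝ, ∀ t ∈ Icc (0:ℝ) 1, ∀ a ∈ F t, ‖a‖ ≤ M) →
        ∀ KF : ℝ, 0 ≤ KF →
        (∀ s ∈ Icc (0:ℝ) 1, ∀ t ∈ Icc (0:ℝ) 1,
          Metric.hausdorffDist (F s) (F t) ≤ KF * |s - t| ^ γ) →
        ∀ ξ ∈ F 0,
          ∃ f : ℝ → Euc d,
            (∀ t ∈ Icc (0:ℝ) 1, f t ∈ F t) ∧ f 0 = ξ ∧
            FinitePVar p 0 1 f ∧ pVar p 0 1 f ≤ C * KF := by
  classical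
  obtain ⟨hγ0, hγ1⟩ := hγ
  have h1γ : (1:ℝ) ≤ 1/γ := by rw [le_div_iff₀ hγ0]; linarith
  have hp1 : (1:ℝ) ≤ p := le_trans h1γ hp.le
  have hp0 : (0:ℝ) < p := lt_of_lt_of_le one_pos hp1
  have hpγ1 : (1:ℝ) < p * γ := (div_lt_iff₀ hγ0).mp hp
  have hpinvγ : 1/p < γ := by rw [div_lt_iff₀ hp0]; nlinarith
  set r : ℝ := (2:ℝ) ^ (-γ) with hrdef
  have hr0 : 0 < r := Real.rpow_pos_of_pos two_pos _
  have hr1 : r < 1 := Real.rpow_lt_one_of_one_lt_of_neg one_lt_two (by linarith)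
  set θ : ℝ := (2:ℝ) ^ (1/p) * r with hθdef
  have hθ0 : 0 < θ := mul_pos (Real.rpow_pos_of_pos two_pos _) hr0
  have hθ1 : θ < 1 := by
    have h : θ = (2:ℝ) ^ (1/p - γ) := by
      rw [hθdef, hrdef, ← Real.rpow_add two_pos]; ring_nf
    rw [h]
    exact Real.rpow_lt_one_of_one_lt_of_neg one_lt_two (by linarith)
  have h1θ : 0 < 1 - θ := by linarith
  have h1r : 0 < 1 - r := by linarith
  refine ⟨1 + 2 * θ / (1 - θ), by positivity, ?_⟩
  intro d F hne hcpt _hbdd KF hKF hHol ξ hξ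
  -- finiteness of Hausdorff edistances
  have hEdist : ∀ s ∈ Icc (0:ℝ) 1, ∀ t ∈ Icc (0:ℝ) 1,
      EMetric.hausdorffEdist (F s) (F t) ≠ ⊤ := fun s hs t ht =>
    Metric.hausdorffEdist_ne_top_of_nonempty_of_bounded (hne s hs) (hne t ht)
      (hcpt s hs).isBounded (hcpt t ht).isBounded
  -- nearest-point selection
  have key : ∀ s ∈ Icc (0:ℝ) 1, ∀ t ∈ Icc (0:ℝ) 1, ∀ x ∈ F s,
      ∃ y ∈ F t, dist x y ≤ KF * |s - t| ^ γ := by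
    intro s hs t ht x hx
    obtain ⟨y, hy, hyd⟩ := (hcpt t ht).exists_infDist_eq_dist (hne t ht) x
    refine ⟨y, hy, ?_⟩
    rw [← hyd]
    exact le_trans (Metric.infDist_le_hausdorffDist_of_mem hx (hEdist s hs t ht)) (hHol s hs t ht)
  set nxt : ℝ → ℝ → Euc d → Euc d := fun s t x =>
    if h : s ∈ Icc (0:ℝ) 1 ∧ t ∈ Icc (0:ℝ) 1 ∧ x ∈ F s then (key s h.1 t h.2.1 x h.2.2).choose
    else x with hnxtdef
  have nxt_spec : ∀ s ∈ Icc (0:ℝ) 1, ∀ t ∈ Icc (0:ℝ) 1, ∀ x ∈ F s,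
      nxt s t x ∈ F t ∧ dist x (nxt s t x) ≤ KF * |s - t| ^ γ := by
    intro s hs t ht x hx
    have h : s ∈ Icc (0:ℝ) 1 ∧ t ∈ Icc (0:ℝ) 1 ∧ x ∈ F s := ⟨hs, ht, hx⟩
    rw [hnxtdef]
    simp only [dif_pos h]
    obtain ⟨hy, hyd⟩ := (key s h.1 t h.2.1 x h.2.2).choose_spec
    exact ⟨hy, hyd⟩
  -- dyadic construction
  set g : ℕ → ℕ → Euc d := fun m => Nat.rec
    (fun k => if k = 0 then ξ else nxt 0 1 ξ)
    (fun m gm k => if k % 2 = 0 then gm (k/2)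
      else nxt (((k/2 : ℕ) : ℝ) / 2^m) ((k : ℝ) / 2^(m+1)) (gm (k/2))) m with hgdef
  have g0 : ∀ k, g 0 k = if k = 0 then ξ else nxt 0 1 ξ := fun k => rfl
  have gs : ∀ m k, g (m+1) k = if k % 2 = 0 then g m (k/2)
      else nxt (((k/2 : ℕ) : ℝ) / 2^m) ((k : ℝ) / 2^(m+1)) (g m (k/2)) := fun m k => rfl
  have hdm : ∀ m k : ℕ, k ≤ 2^m → ((k:ℝ)/2^m) ∈ Icc (0:ℝ) 1 := by
    intro m k hk
    constructor
    · positivity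
    · rw [div_le_one (by positivity)]
      exact_mod_cast hk
  have h01 : (0:ℝ) ∈ Icc (0:ℝ) 1 := ⟨le_rfl, zero_le_one⟩
  have h11 : (1:ℝ) ∈ Icc (0:ℝ) 1 := ⟨zero_le_one, le_rfl⟩
  -- membership invariant
  have gmem : ∀ (m : ℕ), ∀ (k : ℕ), k ≤ 2^m → g m k ∈ F ((k:ℝ)/2^m) := by
    intro m
    induction m with
    | zero =>
        intro k hk
        norm_num at hk
        interval_cases k
        · simpa [g0] using hξ
        · rw [g0]
          norm_num
          exact (nxt_spec 0 h01 1 h11 ξ hξ).1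
    | succ m ih =>
        intro k hk
        have hpow : (2:ℕ)^(m+1) = 2 * 2^m := by rw [pow_succ]; ring
        rw [gs]
        by_cases hke : k % 2 = 0
        · rw [if_pos hke]
          have h2 : k / 2 ≤ 2^m := by omega
          have h3 := ih (k/2) h2
          have hcast : (((k/2 : ℕ)) : ℝ)/2^m = (k:ℝ)/2^(m+1) := by
            obtain ⟨j, hj⟩ : ∃ j, k = 2*j := ⟨k/2, by omega⟩
            subst hj
            have hj2 : (2*j)/2 = j := by omega
            rw [hj2]
            push_cast
            rw [pow_succ]
            field_simp
          rwa [hcast] at h3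
        · rw [if_neg hke]
          have h2 : k / 2 ≤ 2^m := by omega
          exact (nxt_spec _ (hdm m (k/2) h2) _ (hdm (m+1) k hk) _ (ih (k/2) h2)).1
  -- dyadic power identity
  have hrp : ∀ m : ℕ, ((1:ℝ)/2^m) ^ γ = r ^ m := by
    intro m
    have h1 : ((1:ℝ)/2^m) = (2:ℝ) ^ (-((m:ℕ):ℝ)) := by
      rw [Real.rpow_neg (by norm_num), Real.rpow_natCast, one_div]
    rw [h1, hrdef, ← Real.rpow_natCast ((2:ℝ) ^ (-γ)) m,
      ← Real.rpow_mul (by norm_num : (0:ℝ) ≤ 2), ← Real.rpow_mul (by norm_num : (0:ℝ) ≤ 2)]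
    ring_nf
  -- distance estimate for the construction
  have gdist : ∀ (m k : ℕ), k ≤ 2^(m+1) → dist (g m (k/2)) (g (m+1) k) ≤ KF * r^(m+1) := by
    intro m k hk
    have hpow : (2:ℕ)^(m+1) = 2 * 2^m := by rw [pow_succ]; ring
    rw [gs]
    by_cases hke : k % 2 = 0
    · rw [if_pos hke, dist_self]
      positivity
    · rw [if_neg hke]
      have h2 : k / 2 ≤ 2^m := by omega
      have hd := (nxt_spec _ (hdm m (k/2) h2) _ (hdm (m+1) k hk) _ (gmem m (k/2) h2)).2
      refine le_trans hd ?_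
      have habs : |(((k/2:ℕ)):ℝ)/2^m - (k:ℝ)/2^(m+1)| = 1/2^(m+1) := by
        obtain ⟨j, hj⟩ : ∃ j, k = 2*j+1 := ⟨k/2, by omega⟩
        subst hj
        have hj2 : (2*j+1)/2 = j := by omega
        rw [hj2]
        have h3 : (j:ℝ)/2^m - ((2*j+1:ℕ):ℝ)/2^(m+1) = -(1/2^(m+1)) := by
          push_cast
          rw [pow_succ]
          field_simp
          ring
        rw [h3, abs_neg, abs_of_nonneg (by positivity)]
      rw [habs, hrp (m+1)]
  -- the approximating functions
  set D : ℕ → ℝ → Euc d := fun m t => g m ⌊(((2^m : ℕ)) : ℝ) * t⌋₊ with hDdef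
  have hDfun : ∀ m, D m = fun t => g m ⌊(((2^m : ℕ)) : ℝ) * t⌋₊ := fun m => rfl
  have hfle : ∀ N : ℕ, ∀ t ∈ Icc (0:ℝ) 1, ⌊(N:ℝ)*t⌋₊ ≤ N := by
    intro N t ht
    calc ⌊(N:ℝ)*t⌋₊ ≤ ⌊(N:ℝ)⌋₊ :=
          Nat.floor_le_floor (by nlinarith [ht.1, ht.2, Nat.cast_nonneg (α := ℝ) N])
      _ = N := Nat.floor_natCast N
  have hfloor : ∀ (m : ℕ) (t : ℝ), ⌊(((2^m:ℕ)):ℝ) * t⌋₊ = ⌊(((2^(m+1):ℕ)):ℝ) * t⌋₊ / 2 := by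
    intro m t
    rw [← Nat.floor_div_natCast]
    congr 1
    push_cast [pow_succ]
    ring
  have hmbd : ∀ (m k : ℕ), k ≤ 2^(m+1) → ‖g (m+1) k - g m (k/2)‖ ≤ KF * r^(m+1) := by
    intro m k hk
    rw [← dist_eq_norm, dist_comm]
    exact gdist m k hk
  have hDm2 : ∀ m t, D m t = g m (⌊(((2^(m+1):ℕ)):ℝ) * t⌋₊ / 2) := by
    intro m t
    rw [hDfun m]
    simp only
    rw [hfloor]
  have hembd : ∀ m, ∀ t ∈ Icc (0:ℝ) 1, ‖D (m+1) t - D m t‖ ≤ KF * r^(m+1) := by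
    intro m t ht
    rw [hDm2 m t, hDfun (m+1)]
    simp only
    exact hmbd m _ (hfle _ t ht)
  -- geometric summability
  have hgeomsum : Summable (fun m : ℕ => KF * r^(m+1)) := by
    have h2 : (fun m : ℕ => KF * r ^ (m+1)) = fun m => (KF * r) * r ^ m := by
      funext m; ring
    rw [h2]
    exact (summable_geometric_of_lt_one hr0.le hr1).mul_left _
  have hsum : ∀ t ∈ Icc (0:ℝ) 1, Summable (fun m => D (m+1) t - D m t) := fun t ht =>
    Summable.of_norm_bounded hgeomsum (fun m => hembd m t ht)
  set f : ℝ → Euc d := fun t => D 0 t + ∑' m, (D (m+1) t - D m t) with hfdef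
  clear_value nxt g D f
  have hDMsum : ∀ (t : ℝ) (M : ℕ),
      D 0 t + ∑ m ∈ Finset.range M, (D (m+1) t - D m t) = D M t := by
    intro t M
    rw [Finset.sum_range_sub (fun m => D m t)]
    abel
  have htend : ∀ t ∈ Icc (0:ℝ) 1,
      Filter.Tendsto (fun M => D M t) Filter.atTop (nhds (f t)) := by
    intro t ht
    have h1 := (hsum t ht).hasSum.tendsto_sum_nat
    have h2 := h1.const_add (D 0 t)
    simp only [hDMsum t] at h2
    rw [hfdef]
    simp only
    exact h2
  -- f 0 = ξ
  have hg0' : ∀ m, g m 0 = ξ := by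
    intro m
    induction m with
    | zero => simp [g0]
    | succ m ih => rw [gs]; simpa using ih
  have hD0 : ∀ m, D m 0 = ξ := by
    intro m
    rw [hDfun m]
    simp [hg0']
  have hf0 : f 0 = ξ := by
    have hz : (fun m : ℕ => D (m+1) 0 - D m 0) = fun _ => 0 := by
      funext m
      rw [hD0, hD0, sub_self]
    rw [hfdef]
    simp only
    rw [hz, tsum_zero, hD0, add_zero]
  -- selection property
  have hmem : ∀ t ∈ Icc (0:ℝ) 1, f t ∈ F t := by
    intro t ht
    have hCb : ∀ M : ℕ, Metric.infDist (f t) (F t) ≤ dist (f t) (D M t) + KF * r^M := by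
      intro M
      have hk : ⌊(((2^M:ℕ)):ℝ) * t⌋₊ ≤ 2^M := hfle _ t ht
      have h2 : Metric.infDist (D M t) (F t) ≤
          Metric.hausdorffDist (F (((⌊(((2^M:ℕ)):ℝ)*t⌋₊ : ℕ) : ℝ)/2^M)) (F t) :=
        Metric.infDist_le_hausdorffDist_of_mem (by rw [hDfun M]; exact gmem M _ hk)
          (hEdist _ (hdm M _ hk) _ ht)
      have h3 := hHol _ (hdm M _ hk) _ ht
      have h4 : |((⌊(((2^M:ℕ)):ℝ)*t⌋₊ : ℕ) : ℝ)/2^M - t| ≤ 1/2^M := by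
        have hc2 : ((2:ℝ))^M = (((2^M:ℕ)):ℝ) := by push_cast; ring
        rw [hc2]
        have h2M : (0:ℝ) < (((2^M:ℕ)):ℝ) := by positivity
        have hle1 : ((⌊(((2^M:ℕ)):ℝ)*t⌋₊ : ℕ) : ℝ) ≤ (((2^M:ℕ)):ℝ) * t :=
          Nat.floor_le (mul_nonneg h2M.le ht.1)
        have hlt2 : (((2^M:ℕ)):ℝ) * t < (⌊(((2^M:ℕ)):ℝ)*t⌋₊ : ℕ) + 1 :=
          Nat.lt_floor_add_one _
        have hinv : (1/(((2^M:ℕ)):ℝ)) * (((2^M:ℕ)):ℝ) = 1 := by field_simp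
        have hxpos : (0:ℝ) < 1/(((2^M:ℕ)):ℝ) := by positivity
        rw [abs_le]
        constructor
        · have h8 : t - 1/(((2^M:ℕ)):ℝ) ≤ ((⌊(((2^M:ℕ)):ℝ)*t⌋₊ : ℕ) : ℝ)/(((2^M:ℕ)):ℝ) := by
            rw [le_div_iff₀ h2M]
            nlinarith
          linarith
        · have h9 : ((⌊(((2^M:ℕ)):ℝ)*t⌋₊ : ℕ) : ℝ)/(((2^M:ℕ)):ℝ) ≤ t := by
            rw [div_le_iff₀ h2M]
            nlinarith
          linarith
      have h5 : KF * |((⌊(((2^M:ℕ)):ℝ)*t⌋₊ : ℕ) : ℝ)/2^M - t| ^ γ ≤ KF * r^M := by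
        have := Real.rpow_le_rpow (abs_nonneg _) h4 hγ0.le
        rw [hrp M] at this
        exact mul_le_mul_of_nonneg_left this hKF
      have h6 : Metric.infDist (f t) (F t) ≤ Metric.infDist (D M t) (F t) + dist (f t) (D M t) :=
        Metric.infDist_le_infDist_add_dist
      have h7 := le_trans h2 (le_trans h3 h5)
      linarith
    have h0 : Metric.infDist (f t) (F t) ≤ 0 := by
      have ha : Filter.Tendsto (fun M : ℕ => dist (f t) (D M t)) Filter.atTop (nhds 0) := by
        have := (htend t ht).dist (tendsto_const_nhds (x := f t))
        simpa [dist_comm] using this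
      have hb : Filter.Tendsto (fun M : ℕ => KF * r^M) Filter.atTop (nhds 0) := by
        have := (tendsto_pow_atTop_nhds_zero_of_lt_one hr0.le hr1).const_mul KF
        simpa using this
      have hlim : Filter.Tendsto (fun M : ℕ => dist (f t) (D M t) + KF * r^M)
          Filter.atTop (nhds 0) := by
        simpa using ha.add hb
      exact ge_of_tendsto hlim (Filter.Eventually.of_forall hCb)
    have heq : Metric.infDist (f t) (F t) = 0 := le_antisymm h0 Metric.infDist_nonneg
    obtain ⟨y, hy, hyd⟩ := (hcpt t ht).exists_infDist_eq_dist (hne t ht) (f t)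
    have hz : dist (f t) y = 0 := by rw [← hyd, heq]
    rw [dist_eq_zero] at hz
    rw [hz]
    exact hy
  -- distance from ξ to g 0 1
  have hd01 : ‖ξ - nxt 0 1 ξ‖ ≤ KF := by
    have h := (nxt_spec 0 h01 1 h11 ξ hξ).2
    rw [dist_eq_norm] at h
    simpa [Real.one_rpow] using h
  -- p-variation estimates
  have hSD0 : ∀ P : PVarPartition 0 1, pvarSum p (D 0) P ^ (1/p) ≤ KF := by
    intro P
    have hb : ∀ j, j ≤ 2^0 → ∀ k, k ≤ 2^0 → ‖g 0 j - g 0 k‖ ≤ KF := by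
      intro j hj k hk
      norm_num at hj hk
      interval_cases j <;> interval_cases k
      · simp [g0, hKF]
      · simpa [g0] using hd01
      · rw [norm_sub_rev]
        simpa [g0] using hd01
      · simp [g0, hKF]
    have h1 : pvarSum p (fun t => g 0 ⌊(((2^0:ℕ)):ℝ) * t⌋₊) P ≤ ((2^0 : ℕ) : ℝ) * KF ^ p :=
      pvar_step hp1 P (2^0) (g 0) hKF hb
    rw [hDfun 0]
    calc pvarSum p (fun t => g 0 ⌊(((2^0:ℕ)):ℝ) * t⌋₊) P ^ (1/p)
        ≤ (((2^0 : ℕ) : ℝ) * KF ^ p) ^ (1/p) :=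
          Real.rpow_le_rpow (pvarSum_nonneg _ _ _) h1 (by positivity)
      _ = KF := by
          have hsimp : ((2^0 : ℕ) : ℝ) * KF ^ p = KF ^ p := by norm_num
          rw [hsimp, one_div, Real.rpow_rpow_inv hKF hp0.ne']
  have hSem : ∀ m, ∀ P : PVarPartition 0 1,
      pvarSum p (fun t => D (m+1) t - D m t) P ^ (1/p) ≤ 2 * KF * θ^(m+1) := by
    intro m P
    have hb : ∀ j, j ≤ 2^(m+1) → ∀ k, k ≤ 2^(m+1) →
        ‖(g (m+1) j - g m (j/2)) - (g (m+1) k - g m (k/2))‖ ≤ 2 * (KF * r^(m+1)) := by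
      intro j hj k hk
      calc ‖(g (m+1) j - g m (j/2)) - (g (m+1) k - g m (k/2))‖
          ≤ ‖g (m+1) j - g m (j/2)‖ + ‖g (m+1) k - g m (k/2)‖ := norm_sub_le _ _
        _ ≤ KF * r^(m+1) + KF * r^(m+1) := add_le_add (hmbd m j hj) (hmbd m k hk)
        _ = 2 * (KF * r^(m+1)) := by ring
    have h1 : pvarSum p
        (fun t => (fun k => g (m+1) k - g m (k/2)) ⌊(((2^(m+1):ℕ)):ℝ) * t⌋₊) P
        ≤ ((2^(m+1) : ℕ) : ℝ) * (2 * (KF * r^(m+1))) ^ p :=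
      pvar_step hp1 P (2^(m+1)) (fun k => g (m+1) k - g m (k/2)) (by positivity) hb
    have hemeq : (fun t => D (m+1) t - D m t)
        = fun t => (fun k => g (m+1) k - g m (k/2)) ⌊(((2^(m+1):ℕ)):ℝ) * t⌋₊ := by
      funext t
      rw [hDm2 m t, hDfun (m+1)]
    rw [hemeq]
    calc pvarSum p (fun t => (fun k => g (m+1) k - g m (k/2)) ⌊(((2^(m+1):ℕ)):ℝ) * t⌋₊) P ^ (1/p)
        ≤ (((2^(m+1) : ℕ) : ℝ) * (2 * (KF * r^(m+1))) ^ p) ^ (1/p) :=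
          Real.rpow_le_rpow (pvarSum_nonneg _ _ _) h1 (by positivity)
      _ = ((2:ℝ)^(m+1)) ^ ((1:ℝ)/p) * (2 * (KF * r^(m+1))) := by
          push_cast
          rw [Real.mul_rpow (by positivity) (by positivity), one_div,
            Real.rpow_rpow_inv (by positivity) hp0.ne']
      _ = 2 * KF * θ^(m+1) := by
          have h2 : ((2:ℝ)^(m+1) : ℝ) ^ ((1:ℝ)/p) = ((2:ℝ) ^ ((1:ℝ)/p))^(m+1) := by
            rw [← Real.rpow_natCast (2:ℝ) (m+1), ← Real.rpow_natCast ((2:ℝ) ^ ((1:ℝ)/p)) (m+1),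
              ← Real.rpow_mul (by norm_num : (0:ℝ) ≤ 2),
              ← Real.rpow_mul (by norm_num : (0:ℝ) ≤ 2)]
            ring_nf
          rw [h2, hθdef, mul_pow]
          ring
  -- tail estimate
  have htail : ∀ M : ℕ, ∀ t ∈ Icc (0:ℝ) 1,
      ‖f t - D M t‖ ≤ KF * r^(M+1) * (1-r)⁻¹ := by
    intro M t ht
    have hs := hsum t ht
    have he1 : f t - D M t = ∑' i, (D (i+M+1) t - D (i+M) t) := by
      have h1 := Summable.sum_add_tsum_nat_add (f := fun m => D (m+1) t - D m t) M hs
      rw [hfdef]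
      simp only
      rw [← hDMsum t M, ← h1]
      abel
    have hgeo2 : Summable (fun i : ℕ => KF * r^(i+M+1)) := by
      have h2 : (fun i : ℕ => KF * r ^ (i+M+1)) = fun i => (KF * r^(M+1)) * r ^ i := by
        funext i
        rw [show i+M+1 = (M+1)+i from by omega, pow_add]
        ring
      rw [h2]
      exact (summable_geometric_of_lt_one hr0.le hr1).mul_left _
    have hnorms : Summable (fun i : ℕ => ‖D (i+M+1) t - D (i+M) t‖) :=
      Summable.of_nonneg_of_le (fun _ => norm_nonneg _) (fun i => hembd (i+M) t ht) hgeo2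
    rw [he1]
    calc ‖∑' i, (D (i+M+1) t - D (i+M) t)‖ ≤ ∑' i, ‖D (i+M+1) t - D (i+M) t‖ :=
          norm_tsum_le_tsum_norm hnorms
      _ ≤ ∑' i, (KF * r^(i+M+1)) :=
          Summable.tsum_le_tsum (fun i => hembd (i+M) t ht) hnorms hgeo2
      _ = KF * r^(M+1) * (1-r)⁻¹ := by
          have h3 : ∀ i : ℕ, KF * r^(i+M+1) = (KF * r^(M+1)) * r^i := by
            intro i
            rw [show i+M+1 = (M+1)+i from by omega, pow_add]
            ring
          rw [tsum_congr h3, tsum_mul_left, tsum_geometric_of_lt_one hr0.le hr1]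
  -- the main p-variation bound
  have hmain : ∀ P : PVarPartition 0 1, pvarSum p f P ^ (1/p) ≤ (1 + 2 * θ / (1 - θ)) * KF := by
    intro P
    set A : ℝ := KF + 2 * KF * (θ / (1-θ)) with hAdef
    set B : ℝ := (P.n : ℝ) ^ ((1:ℝ)/p) * (2 * (KF * (1-r)⁻¹)) with hBdef
    have hM : ∀ M : ℕ, pvarSum p f P ^ (1/p) ≤ A + B * r^(M+1) := by
      intro M
      have hsplit : f = fun t => D M t + (f t - D M t) := by
        funext t
        abel
      have h1 : pvarSum p f P ^ (1/p)
          ≤ pvarSum p (D M) P ^ (1/p) + pvarSum p (fun t => f t - D M t) P ^ (1/p) := by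
        conv_lhs => rw [hsplit]
        exact pvarS_add hp1 P _ _
      have h2 : pvarSum p (D M) P ^ (1/p) ≤ A := by
        have hsplit2 : D M = fun t => D 0 t + ∑ m ∈ Finset.range M, (D (m+1) t - D m t) := by
          funext t
          rw [hDMsum t M]
        have hgs : ∑ m ∈ Finset.range M, θ^(m+1) ≤ θ / (1-θ) := by
          have hθs : ∑ m ∈ Finset.range M, θ^m ≤ (1-θ)⁻¹ := by
            have := Summable.sum_le_tsum (Finset.range M) (fun i _ => (pow_nonneg hθ0.le i))
              (summable_geometric_of_lt_one hθ0.le hθ1)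
            rwa [tsum_geometric_of_lt_one hθ0.le hθ1] at this
          have he : ∑ m ∈ Finset.range M, θ^(m+1) = θ * ∑ m ∈ Finset.range M, θ^m := by
            rw [Finset.mul_sum]
            exact Finset.sum_congr rfl fun m _ => by rw [pow_succ]; ring
          rw [he, div_eq_mul_inv]
          exact mul_le_mul_of_nonneg_left hθs hθ0.le
        calc pvarSum p (D M) P ^ (1/p)
            ≤ pvarSum p (D 0) P ^ (1/p)
              + pvarSum p (fun t => ∑ m ∈ Finset.range M, (D (m+1) t - D m t)) P ^ (1/p) := by
              conv_lhs => rw [hsplit2]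
              exact pvarS_add hp1 P _ _
          _ ≤ KF + ∑ m ∈ Finset.range M, (2 * KF * θ^(m+1)) := by
              refine add_le_add (hSD0 P) ?_
              refine le_trans (pvarS_sum hp1 P (fun m t => D (m+1) t - D m t) M) ?_
              exact Finset.sum_le_sum fun m _ => hSem m P
          _ ≤ A := by
              show KF + ∑ m ∈ Finset.range M, (2 * KF * θ ^ (m + 1)) ≤ KF + 2 * KF * (θ / (1 - θ))
              have h7 := mul_le_mul_of_nonneg_left hgs (by positivity : (0:ℝ) ≤ 2 * KF)
              have h8 : ∑ m ∈ Finset.range M, 2 * KF * θ ^ (m + 1)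
                  = 2 * KF * ∑ m ∈ Finset.range M, θ ^ (m + 1) := by
                rw [Finset.mul_sum]
              linarith
      have h3 : pvarSum p (fun t => f t - D M t) P ^ (1/p) ≤ B * r^(M+1) := by
        have hub : ∀ t ∈ Icc (0:ℝ) 1, ‖f t - D M t‖ ≤ KF * r^(M+1) * (1-r)⁻¹ :=
          htail M
        have h4 := pvar_unif hp1 P _ hub
        calc pvarSum p (fun t => f t - D M t) P ^ (1/p)
            ≤ ((P.n : ℝ) * (2 * (KF * r^(M+1) * (1-r)⁻¹)) ^ p) ^ (1/p) :=
              Real.rpow_le_rpow (pvarSum_nonneg _ _ _) h4 (by positivity)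
          _ = (P.n : ℝ) ^ ((1:ℝ)/p) * (2 * (KF * r^(M+1) * (1-r)⁻¹)) := by
              rw [Real.mul_rpow (by positivity) (by positivity), one_div,
                Real.rpow_rpow_inv (by positivity) hp0.ne']
          _ = B * r^(M+1) := by
              rw [hBdef]
              ring
      linarith
    have hlim : Filter.Tendsto (fun M : ℕ => A + B * r^(M+1)) Filter.atTop (nhds A) := by
      have h1 : Filter.Tendsto (fun M : ℕ => r^(M+1)) Filter.atTop (nhds 0) := by
        have := (tendsto_pow_atTop_nhds_zero_of_lt_one hr0.le hr1).comp
          (Filter.tendsto_add_atTop_nat 1)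
        exact this
      have h2 := (h1.const_mul B).const_add A
      simpa using h2
    have h5 : pvarSum p f P ^ (1/p) ≤ A := ge_of_tendsto hlim (Filter.Eventually.of_forall hM)
    refine le_trans h5 ?_
    rw [hAdef]
    ring_nf
    nlinarith [div_nonneg hθ0.le h1θ.le]
  -- conclude
  have hCKF : 0 ≤ (1 + 2 * θ / (1 - θ)) * KF := by positivity
  have hFPV : FinitePVar p 0 1 f := by
    refine ⟨((1 + 2 * θ / (1 - θ)) * KF) ^ p, ?_⟩
    rintro x ⟨P, rfl⟩
    have h1 := hmain P
    have h2 : pvarSum p f P = (pvarSum p f P ^ (1/p)) ^ p := by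
      rw [one_div, Real.rpow_inv_rpow (pvarSum_nonneg _ _ _) hp0.ne']
    rw [h2]
    exact Real.rpow_le_rpow (Real.rpow_nonneg (pvarSum_nonneg _ _ _) _) h1 hp0.le
  refine ⟨f, hmem, hf0, hFPV, ?_⟩
  have P0 : PVarPartition 0 1 :=
    ⟨1, fun i => if i = 0 then 0 else 1, one_pos, by simp, by simp, by
      intro i hi
      have : i = 0 := by omega
      simp [this]⟩
  have hne' : (pvarSums p 0 1 f).Nonempty := ⟨pvarSum p f P0, P0, rfl⟩
  have hub : sSup (pvarSums p 0 1 f) ≤ ((1 + 2 * θ / (1 - θ)) * KF) ^ p := by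
    refine csSup_le hne' ?_
    rintro x ⟨P, rfl⟩
    have h2 : pvarSum p f P = (pvarSum p f P ^ (1/p)) ^ p := by
      rw [one_div, Real.rpow_inv_rpow (pvarSum_nonneg _ _ _) hp0.ne']
    rw [h2]
    exact Real.rpow_le_rpow (Real.rpow_nonneg (pvarSum_nonneg _ _ _) _) (hmain P) hp0.le
  have hsup0 : 0 ≤ sSup (pvarSums p 0 1 f) :=
    le_trans (pvarSum_nonneg p f P0) (le_csSup hFPV ⟨P0, rfl⟩)
  calc pVar p 0 1 f = sSup (pvarSums p 0 1 f) ^ (1/p) := rfl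
    _ ≤ (((1 + 2 * θ / (1 - θ)) * KF) ^ p) ^ (1/p) :=
        Real.rpow_le_rpow hsup0 hub (by positivity)
    _ = (1 + 2 * θ / (1 - θ)) * KF := by
        rw [one_div, Real.rpow_rpow_inv hCKF hp0.ne']
end

section
/- Let a ≤ b and let μ : Δ_{a,b} → ℝ^d, where Δ_{a,b} = {(s,t) : a ≤ s ≤ t ≤ b}. Suppose there exist positive exponents α₁, α₂ with α₁ + α₂ > 1 and controls ω₁, ω₂ on [a,b], with ω₂ regular, such that |μ_{s,t} − μ_{s,u} − μ_{u,t}| ≤ ω₁(s,u)^{α₁} ω₂(u,t)^{α₂} for all a ≤ s ≤ u ≤ t ≤ b. Then for every interval [s,t] ⊂ [a,b], the sums μ_π = Σ_i μ_{s_i, s_{i+1}} over finite partitions π = {s_i} of [s,t] converge to a limit I_s^t(μ) as the mesh of π tends to 0, and |I_s^t(μ) − μ_{s,t}| ≤ C ω₁(s, t⁻)^{α₁} ω₂(s,t)^{α₂} for a positive constant C depending only on α₁ and α₂, where ω₁(s, t⁻) denotes the left limit in t of ω₁(s, ·). -/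
open Set

noncomputable section

/-- A finite partition of the interval `[a, b]`, given by points
`a = t 0 ≤ t 1 ≤ ⋯ ≤ t n = b`. -/
structure SewPartition (a b : ℝ) where
  n : ℕ
  t : ℕ → ℝ
  npos : 0 < n
  first : t 0 = a
  last : t n = b
  mono : ∀ i, i < n → t i ≤ t (i + 1)

/-- The partition has mesh `< δ`. -/
def SewPartition.fine {a b : ℝ} (P : SewPartition a b) (δ : ℝ) : Prop :=
  ∀ i < P.n, P.t (i + 1) - P.t i < δ

/-- `ω` is a control on `[a,b]`: it vanishes on the diagonal, is non-negative,
non-increasing in its first argument and non-decreasing in its second one,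
and super-additive. -/
def IsControl (a b : ℝ) (ω : ℝ → ℝ → ℝ) : Prop :=
  (∀ s ∈ Icc a b, ω s s = 0) ∧
  (∀ s t : ℝ, a ≤ s → s ≤ t → t ≤ b → 0 ≤ ω s t) ∧
  (∀ s' s t t' : ℝ, a ≤ s' → s' ≤ s → s ≤ t → t ≤ t' → t' ≤ b → ω s t ≤ ω s' t') ∧
  (∀ s u t : ℝ, a ≤ s → s ≤ u → u ≤ t → t ≤ b → ω s u + ω u t ≤ ω s t)

/-- A control is regular if it is continuous in a neighbourhood of the diagonal. -/
def IsRegularControl (a b : ℝ) (ω : ℝ → ℝ → ℝ) : Prop :=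
  ∃ ε > 0, ContinuousOn (fun q : ℝ × ℝ => ω q.1 q.2)
    {q : ℝ × ℝ | a ≤ q.1 ∧ q.1 ≤ q.2 ∧ q.2 ≤ b ∧ q.2 - q.1 < ε}

end


section SewingAux
open Finset

lemma hoelder2 {θ : ℝ} (hθ : 0 < θ) (hθ1 : θ < 1)
    {A B C D : ℝ} (hA : 0 ≤ A) (hB : 0 ≤ B) (hC : 0 ≤ C) (hD : 0 ≤ D) :
    A ^ θ * B ^ (1 - θ) + C ^ θ * D ^ (1 - θ) ≤ (A + C) ^ θ * (B + D) ^ (1 - θ) := by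
  rcases eq_or_lt_of_le (by positivity : (0:ℝ) ≤ A + C) with hAC | hAC
  · have hA0 : A = 0 := by nlinarith
    have hC0 : C = 0 := by nlinarith
    simp [hA0, hC0, Real.zero_rpow hθ.ne']
  rcases eq_or_lt_of_le (by positivity : (0:ℝ) ≤ B + D) with hBD | hBD
  · have hB0 : B = 0 := by nlinarith
    have hD0 : D = 0 := by nlinarith
    simp [hB0, hD0, Real.zero_rpow (by linarith : 1 - θ ≠ 0)]
  have key : ∀ x y : ℝ, 0 ≤ x → 0 ≤ y →
      x ^ θ * y ^ (1 - θ) ≤ (θ * (x / (A + C)) + (1 - θ) * (y / (B + D))) *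
        ((A + C) ^ θ * (B + D) ^ (1 - θ)) := by
    intro x y hx hy
    have h1 : x ^ θ * y ^ (1-θ) = ((x/(A+C)) ^ θ * (y/(B+D)) ^ (1-θ)) *
        ((A + C) ^ θ * (B + D) ^ (1 - θ)) := by
      rw [Real.div_rpow hx hAC.le, Real.div_rpow hy hBD.le]
      field_simp
    rw [h1]
    refine mul_le_mul_of_nonneg_right ?_ (by positivity)
    exact Real.geom_mean_le_arith_mean2_weighted hθ.le (by linarith) (by positivity)
        (by positivity) (by ring)
  calc A ^ θ * B ^ (1 - θ) + C ^ θ * D ^ (1 - θ)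
      ≤ (θ * (A / (A + C)) + (1 - θ) * (B / (B + D))) * ((A + C) ^ θ * (B + D) ^ (1 - θ))
        + (θ * (C / (A + C)) + (1 - θ) * (D / (B + D))) * ((A + C) ^ θ * (B + D) ^ (1 - θ)) :=
        add_le_add (key A B hA hB) (key C D hC hD)
    _ = ((θ * ((A + C)/(A+C))) + (1-θ) * ((B+D)/(B+D))) * ((A + C) ^ θ * (B + D) ^ (1 - θ)) := by
        ring
    _ = (A + C) ^ θ * (B + D) ^ (1 - θ) := by
        rw [div_self hAC.ne', div_self hBD.ne']; ring

lemma omega_control {a b : ℝ} {ω₁ ω₂ : ℝ → ℝ → ℝ} (h1 : IsControl a b ω₁)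
    (h2 : IsControl a b ω₂) {θ : ℝ} (hθ : 0 < θ) (hθ1 : θ < 1) :
    IsControl a b (fun u v => ω₁ u v ^ θ * ω₂ u v ^ (1 - θ)) := by
  obtain ⟨d1, n1, m1, s1⟩ := h1
  obtain ⟨d2, n2, m2, s2⟩ := h2
  refine ⟨?_, ?_, ?_, ?_⟩
  · intro s hs
    simp only [d1 s hs, Real.zero_rpow hθ.ne', zero_mul]
  · intro s t hs hst htb
    have := n1 s t hs hst htb
    have := n2 s t hs hst htb
    positivity
  · intro s' s t t' h1' h2' h3' h4' h5'
    have e1 := m1 s' s t t' h1' h2' h3' h4' h5'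
    have e2 := m2 s' s t t' h1' h2' h3' h4' h5'
    have n1' := n1 s t (le_trans h1' h2') h3' (le_trans h4' h5')
    have n2' := n2 s t (le_trans h1' h2') h3' (le_trans h4' h5')
    exact mul_le_mul (Real.rpow_le_rpow n1' e1 hθ.le)
      (Real.rpow_le_rpow n2' e2 (by linarith)) (Real.rpow_nonneg n2' _)
      (Real.rpow_nonneg (n1 s' t' h1' (by linarith) h5') _)
  · intro s u t hs hsu hut htb
    calc ω₁ s u ^ θ * ω₂ s u ^ (1-θ) + ω₁ u t ^ θ * ω₂ u t ^ (1-θ)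
        ≤ (ω₁ s u + ω₁ u t) ^ θ * (ω₂ s u + ω₂ u t) ^ (1-θ) :=
          hoelder2 hθ hθ1 (n1 s u hs hsu (le_trans hut htb))
            (n2 s u hs hsu (le_trans hut htb)) (n1 u t (le_trans hs hsu) hut htb)
            (n2 u t (le_trans hs hsu) hut htb)
      _ ≤ ω₁ s t ^ θ * ω₂ s t ^ (1-θ) := by
          have q1 := s1 s u t hs hsu hut htb
          have q2 := s2 s u t hs hsu hut htb
          have r1 : 0 ≤ ω₁ s u + ω₁ u t := by
            have := n1 s u hs hsu (le_trans hut htb)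
            have := n1 u t (le_trans hs hsu) hut htb; linarith
          have r2 : 0 ≤ ω₂ s u + ω₂ u t := by
            have := n2 s u hs hsu (le_trans hut htb)
            have := n2 u t (le_trans hs hsu) hut htb; linarith
          exact mul_le_mul (Real.rpow_le_rpow r1 q1 hθ.le)
            (Real.rpow_le_rpow r2 q2 (by linarith)) (Real.rpow_nonneg r2 _)
            (Real.rpow_nonneg (n1 s t hs (le_trans hsu hut) htb) _)

lemma chain_mono {c : ℕ → ℝ} {n : ℕ} (h : ∀ i < n, c i ≤ c (i + 1)) :
    ∀ i j, i ≤ j → j ≤ n → c i ≤ c j := by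
  intro i j hij hjn
  induction j with
  | zero => simp_all
  | succ k ih =>
    rcases Nat.lt_or_ge i (k+1) with hk | hk
    · exact le_trans (ih (by omega) (by omega)) (h k (by omega))
    · have : i = k + 1 := by omega
      simp [this]

lemma chainSum {a b : ℝ} {ω : ℝ → ℝ → ℝ} (hω : IsControl a b ω) {n : ℕ} {c : ℕ → ℝ}
    (hc : ∀ i < n, c i ≤ c (i + 1)) (h0 : a ≤ c 0) (hn : c n ≤ b) :
    ∑ i ∈ range n, ω (c i) (c (i + 1)) ≤ ω (c 0) (c n) := by
  induction n with
  | zero => simp [hω.1 (c 0) ⟨h0, le_trans (chain_mono hc 0 0 le_rfl le_rfl) hn⟩]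
  | succ k ih =>
    rw [Finset.sum_range_succ]
    have hc' : ∀ i < k, c i ≤ c (i+1) := fun i hi => hc i (by omega)
    have hk : c k ≤ c (k+1) := hc k (by omega)
    calc ∑ i ∈ range k, ω (c i) (c (i+1)) + ω (c k) (c (k+1))
        ≤ ω (c 0) (c k) + ω (c k) (c (k+1)) := by
          exact add_le_add_left (ih hc' (le_trans hk hn)) _
      _ ≤ ω (c 0) (c (k+1)) := hω.2.2.2 (c 0) (c k) (c (k+1)) h0
          (chain_mono hc 0 k (by omega) (by omega)) hk hn

lemma paritySum {a b : ℝ} {ω : ℝ → ℝ → ℝ} (hω : IsControl a b ω) {n : ℕ} {c : ℕ → ℝ}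
    (hc : ∀ i < n + 1, c i ≤ c (i + 1)) (h0 : a ≤ c 0) (hn : c (n + 1) ≤ b) :
    ∑ i ∈ Finset.Icc 1 n, ω (c (i - 1)) (c (i + 1)) ≤ 2 * ω (c 0) (c (n + 1)) := by
  have hmono := chain_mono hc
  have hab : c 0 ≤ b := le_trans (hmono 0 (n+1) (by omega) le_rfl) hn
  set k₁ := (n + 1) / 2 with hk₁
  set k₂ := n / 2 with hk₂
  have hsplit : Finset.Icc 1 n = ((range k₁).image (fun j => 2*j+1)) ∪
      ((range k₂).image (fun j => 2*j+2)) := by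
    ext i
    simp only [Finset.mem_Icc, Finset.mem_union, Finset.mem_image, Finset.mem_range]
    constructor
    · intro hi
      rcases Nat.even_or_odd i with ⟨j, hj⟩ | ⟨j, hj⟩
      · right; exact ⟨j - 1, by omega, by omega⟩
      · left; exact ⟨j, by omega, by omega⟩
    · rintro (⟨j, hj, rfl⟩ | ⟨j, hj, rfl⟩) <;> omega
  have hdisj : Disjoint ((range k₁).image (fun j => 2*j+1))
      ((range k₂).image (fun j => 2*j+2)) := by
    simp only [Finset.disjoint_left, Finset.mem_image, Finset.mem_range]
    rintro x ⟨j, hj, rfl⟩ ⟨j', hj', h⟩; omega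
  rw [hsplit, Finset.sum_union hdisj, Finset.sum_image (by intro x _ y _ h; simp only at h; omega),
    Finset.sum_image (by intro x _ y _ h; simp only at h; omega)]
  have hodd : ∑ j ∈ range k₁, ω (c (2*j+1-1)) (c (2*j+1+1)) ≤ ω (c 0) (c (n+1)) := by
    have := chainSum (c := fun j => c (2*j)) hω (n := k₁)
      (fun i hi => hmono (2*i) (2*(i+1)) (by omega) (by omega)) h0
      (le_trans (hmono (2*k₁) (n+1) (by omega) le_rfl) hn)
    refine le_trans (le_of_eq ?_) (le_trans this ?_)
    · exact Finset.sum_congr rfl (fun j _ => by norm_num; ring_nf)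
    · exact hω.2.2.1 (c 0) (c 0) (c (2*k₁)) (c (n+1)) h0 le_rfl
        (hmono 0 (2*k₁) (by omega) (by omega)) (hmono (2*k₁) (n+1) (by omega) le_rfl) hn
  have heven : ∑ j ∈ range k₂, ω (c (2*j+2-1)) (c (2*j+2+1)) ≤ ω (c 0) (c (n+1)) := by
    have := chainSum (c := fun j => c (2*j+1)) hω (n := k₂)
      (fun i hi => hmono (2*i+1) (2*(i+1)+1) (by omega) (by omega))
      (le_trans h0 (hmono 0 1 (by omega) (by omega)))
      (le_trans (hmono (2*k₂+1) (n+1) (by omega) le_rfl) hn)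
    refine le_trans (le_of_eq ?_) (le_trans this ?_)
    · exact Finset.sum_congr rfl (fun j _ => by norm_num; ring_nf)
    · exact hω.2.2.1 (c 0) (c 1) (c (2*k₂+1)) (c (n+1)) h0 (hmono 0 1 (by omega) (by omega))
        (hmono 1 (2*k₂+1) (by omega) (by omega)) (hmono (2*k₂+1) (n+1) (by omega) le_rfl) hn
  linarith

lemma remove_sum {E : Type*} [AddCommGroup E] (μ : ℝ → ℝ → E) (c : ℕ → ℝ) (n j : ℕ)
    (hj : j + 1 ≤ n) :
    ∑ i ∈ range n, (fun i => μ (if i < j+1 then c i else c (i+1))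
        (if i+1 < j+1 then c (i+1) else c (i+2))) i
      = ∑ i ∈ range (n+1), μ (c i) (c (i+1))
        - μ (c j) (c (j+1)) - μ (c (j+1)) (c (j+2)) + μ (c j) (c (j+2)) := by
  set f : ℕ → E := fun i => μ (c i) (c (i+1)) with hf
  set f' : ℕ → E := fun i => μ (if i < j+1 then c i else c (i+1))
      (if i+1 < j+1 then c (i+1) else c (i+2)) with hf'
  have e1 : ∑ i ∈ range n, f' i = (∑ i ∈ range j, f i) + μ (c j) (c (j+2))
      + ∑ i ∈ Finset.Ico (j+1) n, f (i+1) := by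
    rw [Finset.range_eq_Ico, ← Finset.sum_Ico_consecutive _ (by omega : 0 ≤ j+1) (by omega : j+1 ≤ n),
      Finset.sum_Ico_succ_top (by omega : 0 ≤ j)]
    congr 1
    · congr 1
      · rw [← Finset.range_eq_Ico]
        refine Finset.sum_congr rfl (fun i hi => ?_)
        simp only [Finset.mem_range] at hi
        simp only [hf', hf, if_pos (by omega : i < j+1), if_pos (by omega : i+1 < j+1)]
      · simp only [hf', if_pos (by omega : j < j+1), if_neg (by omega : ¬ (j+1 < j+1))]
    · refine Finset.sum_congr rfl (fun i hi => ?_)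
      simp only [Finset.mem_Ico] at hi
      simp only [hf', hf, if_neg (by omega : ¬ (i < j+1)), if_neg (by omega : ¬ (i+1 < j+1))]
  have e2 : ∑ i ∈ range (n+1), f i = (∑ i ∈ range j, f i) + f j + f (j+1)
      + ∑ i ∈ Finset.Ico (j+2) (n+1), f i := by
    rw [Finset.range_eq_Ico, ← Finset.sum_Ico_consecutive _ (by omega : 0 ≤ j+2) (by omega : j+2 ≤ n+1),
      Finset.sum_Ico_succ_top (by omega : 0 ≤ j+1), Finset.sum_Ico_succ_top (by omega : 0 ≤ j),
      ← Finset.range_eq_Ico]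
  have e3 : ∑ i ∈ Finset.Ico (j+1) n, f (i+1) = ∑ i ∈ Finset.Ico (j+2) (n+1), f i := by
    rw [Finset.sum_Ico_eq_sum_range, Finset.sum_Ico_eq_sum_range]
    refine Finset.sum_congr (by congr 1; omega) (fun i _ => ?_)
    congr 1; omega
  rw [e1, e2, e3]; abel

lemma maxIneq {E : Type*} [NormedAddCommGroup E] {a b γ : ℝ} (hγ : 1 < γ)
    {ω : ℝ → ℝ → ℝ} (hω : IsControl a b ω) {μ : ℝ → ℝ → E}
    (hdef : ∀ s u t : ℝ, a ≤ s → s ≤ u → u ≤ t → t ≤ b →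
      ‖μ s t - μ s u - μ u t‖ ≤ ω s t ^ γ) :
    ∀ (n : ℕ) (c : ℕ → ℝ), a ≤ c 0 → c n ≤ b → (∀ i < n, c i ≤ c (i + 1)) →
      ‖(∑ i ∈ range n, μ (c i) (c (i + 1))) - μ (c 0) (c n)‖ ≤
        (∑ k ∈ range (n - 1), (2 / ((k : ℝ) + 1)) ^ γ) * ω (c 0) (c n) ^ γ := by
  intro n
  induction n with
  | zero =>
    intro c h0 hb _
    have h00 : ω (c 0) (c 0) = 0 := hω.1 (c 0) ⟨h0, hb⟩
    have := hdef (c 0) (c 0) (c 0) h0 le_rfl le_rfl hb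
    simp only [sub_self, h00, Real.zero_rpow (by linarith : γ ≠ 0)] at this
    simp only [Finset.range_zero, Finset.sum_empty, zero_sub, norm_neg]
    calc ‖μ (c 0) (c 0)‖ ≤ 0 := by
          have : ‖-μ (c 0) (c 0)‖ ≤ 0 := by simpa using this
          simpa using this
      _ ≤ _ := by positivity
  | succ n ih =>
    intro c h0 hb hc
    rcases Nat.eq_zero_or_pos n with rfl | hn
    · rw [Finset.sum_range_one]
      have : 0 ≤ ω (c 0) (c 1) := hω.2.1 _ _ h0 (hc 0 (by omega)) hb
      norm_num
    obtain ⟨m, rfl⟩ : ∃ m, n = m + 1 := ⟨n - 1, by omega⟩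
    set W := ω (c 0) (c (m + 2)) with hW
    have hcm := chain_mono hc
    have hWnn : 0 ≤ W := hω.2.1 _ _ h0 (hcm 0 (m+2) (by omega) le_rfl) hb
    -- pigeonhole
    have hpar := paritySum hω (n := m + 1) hc h0 hb
    have hsum_const : ∑ _i ∈ Finset.Icc 1 (m+1), (2 * W / ((m:ℝ) + 1)) = 2 * W := by
      rw [Finset.sum_const, Nat.card_Icc]
      simp only [nsmul_eq_mul]
      have : ((m + 1 + 1 - 1 : ℕ) : ℝ) = (m : ℝ) + 1 := by push_cast; ring
      rw [this]
      field_simp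
    have hex : ∃ i ∈ Finset.Icc 1 (m+1), ω (c (i-1)) (c (i+1)) ≤ 2 * W / ((m:ℝ)+1) :=
      Finset.exists_le_of_sum_le ⟨1, by simp⟩ (by rw [hsum_const]; exact hpar)
    obtain ⟨i₀, hi₀mem, hi₀⟩ := hex
    simp only [Finset.mem_Icc] at hi₀mem
    obtain ⟨j, rfl⟩ : ∃ j, i₀ = j + 1 := ⟨i₀ - 1, by omega⟩
    have hj1 : j + 1 ≤ m + 1 := hi₀mem.2
    set c' : ℕ → ℝ := fun i => if i < j + 1 then c i else c (i + 1) with hc'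
    have hc'0 : c' 0 = c 0 := by simp [hc']
    have hc'n : c' (m + 1) = c (m + 2) := by
      simp only [hc', if_neg (by omega : ¬ (m + 1 < j + 1))]
    have hc'chain : ∀ i < m + 1, c' i ≤ c' (i + 1) := by
      intro i hi
      simp only [hc']
      rcases Nat.lt_or_ge (i+1) (j+1) with h | h
      · rw [if_pos (by omega), if_pos h]; exact hc i (by omega)
      rcases Nat.lt_or_ge i (j+1) with h' | h'
      · rw [if_pos h', if_neg (by omega)]
        exact le_trans (hc i (by omega)) (hc (i+1) (by omega))
      · rw [if_neg (by omega), if_neg (by omega)]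
        exact hc (i+1) (by omega)
    have hIH := ih c' (hc'0 ▸ h0) (hc'n ▸ hb) hc'chain
    rw [hc'0, hc'n] at hIH
    have hrem : ∑ i ∈ range (m+1), μ (c' i) (c' (i+1))
        = ∑ i ∈ range (m+2), μ (c i) (c (i+1))
          - μ (c j) (c (j+1)) - μ (c (j+1)) (c (j+2)) + μ (c j) (c (j+2)) := by
      have := remove_sum μ c (m + 1) j hj1
      simp only [hc']
      exact this
    have key : ∑ i ∈ range (m+2), μ (c i) (c (i+1)) - μ (c 0) (c (m+2))
        = (∑ i ∈ range (m+1), μ (c' i) (c' (i+1)) - μ (c 0) (c (m+2)))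
          - (μ (c j) (c (j+2)) - μ (c j) (c (j+1)) - μ (c (j+1)) (c (j+2))) := by
      rw [hrem]; abel
    have hdefect : ‖μ (c j) (c (j+2)) - μ (c j) (c (j+1)) - μ (c (j+1)) (c (j+2))‖
        ≤ (2 / ((m:ℝ)+1)) ^ γ * W ^ γ := by
      have haj : a ≤ c j := le_trans h0 (hcm 0 j (by omega) (by omega))
      have hjb : c (j+2) ≤ b := le_trans (hcm (j+2) (m+2) (by omega) le_rfl) hb
      have h1 := hdef (c j) (c (j+1)) (c (j+2)) haj (hc j (by omega)) (hc (j+1) (by omega)) hjb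
      have hnn : 0 ≤ ω (c j) (c (j+2)) := hω.2.1 _ _ haj
        (hcm j (j+2) (by omega) (by omega)) hjb
      have h2 : ω (c j) (c (j+2)) ^ γ ≤ (2 * W / ((m:ℝ)+1)) ^ γ :=
        Real.rpow_le_rpow hnn hi₀ (by linarith)
      have h3 : (2 * W / ((m:ℝ)+1)) ^ γ = (2 / ((m:ℝ)+1)) ^ γ * W ^ γ := by
        rw [show 2 * W / ((m:ℝ)+1) = (2 / ((m:ℝ)+1)) * W by ring,
          Real.mul_rpow (by positivity) hWnn]
      calc ‖_‖ ≤ ω (c j) (c (j+2)) ^ γ := h1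
        _ ≤ (2 * W / ((m:ℝ)+1)) ^ γ := h2
        _ = _ := h3
    calc ‖(∑ i ∈ range (m+2), μ (c i) (c (i+1))) - μ (c 0) (c (m+2))‖
        ≤ ‖∑ i ∈ range (m+1), μ (c' i) (c' (i+1)) - μ (c 0) (c (m+2))‖
          + ‖μ (c j) (c (j+2)) - μ (c j) (c (j+1)) - μ (c (j+1)) (c (j+2))‖ := by
          rw [key]; exact norm_sub_le _ _
      _ ≤ (∑ k ∈ range m, (2 / ((k:ℝ)+1)) ^ γ) * W ^ γ + (2 / ((m:ℝ)+1)) ^ γ * W ^ γ := by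
          exact add_le_add hIH hdefect
      _ = (∑ k ∈ range (m+1), (2 / ((k:ℝ)+1)) ^ γ) * W ^ γ := by
          rw [Finset.sum_range_succ]
          push_cast
          ring
      _ = _ := by norm_num

lemma reg_small {a b : ℝ} {ω₂ : ℝ → ℝ → ℝ} (hω₂ : IsControl a b ω₂)
    (hreg : IsRegularControl a b ω₂) :
    ∀ ε' > 0, ∃ δ > 0, ∀ u v : ℝ, a ≤ u → u ≤ v → v ≤ b → v - u < δ → ω₂ u v ≤ ε' := by
  obtain ⟨ε, hε, hcont⟩ := hreg
  intro ε' hε'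
  set K : Set (ℝ × ℝ) := {q : ℝ × ℝ | a ≤ q.1 ∧ q.1 ≤ q.2 ∧ q.2 ≤ b ∧ q.2 - q.1 ≤ ε/2}
    with hKdef
  have hKclosed : IsClosed K := by
    have : K = {q : ℝ × ℝ | a ≤ q.1} ∩ {q | q.1 ≤ q.2} ∩ {q | q.2 ≤ b} ∩
        {q | q.2 - q.1 ≤ ε/2} := by
      ext q; simp [hKdef]; tauto
    rw [this]
    exact (((isClosed_le continuous_const continuous_fst).inter
      (isClosed_le continuous_fst continuous_snd)).inter
      (isClosed_le continuous_snd continuous_const)).inter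
      (isClosed_le (continuous_snd.sub continuous_fst) continuous_const)
  have hKcompact : IsCompact K := by
    refine (IsCompact.prod (isCompact_Icc (a:=a) (b:=b))
      (isCompact_Icc (a:=a) (b:=b))).of_isClosed_subset hKclosed ?_
    rintro ⟨u, v⟩ ⟨h1, h2, h3, h4⟩
    exact ⟨⟨h1, le_trans h2 h3⟩, ⟨le_trans h1 h2, h3⟩⟩
  have hKS : K ⊆ {q : ℝ × ℝ | a ≤ q.1 ∧ q.1 ≤ q.2 ∧ q.2 ≤ b ∧ q.2 - q.1 < ε} := by
    rintro ⟨u, v⟩ ⟨h1, h2, h3, h4⟩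
    exact ⟨h1, h2, h3, by linarith⟩
  have hUC := hKcompact.uniformContinuousOn_of_continuous (hcont.mono hKS)
  rw [Metric.uniformContinuousOn_iff] at hUC
  obtain ⟨δ, hδ, H⟩ := hUC ε' hε'
  refine ⟨min δ (ε/2), by positivity, fun u v hau huv hvb hdiff => ?_⟩
  have hdiff1 : v - u < δ := lt_of_lt_of_le hdiff (min_le_left _ _)
  have hdiff2 : v - u ≤ ε/2 := le_of_lt (lt_of_lt_of_le hdiff (min_le_right _ _))
  have hub : u ≤ b := le_trans huv hvb
  have hKuv : (u, v) ∈ K := ⟨hau, huv, hvb, hdiff2⟩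
  have hKuu : (u, u) ∈ K := ⟨hau, le_rfl, hub, by simpa using (by positivity : (0:ℝ) ≤ ε/2)⟩
  have hdist : dist ((u, v) : ℝ × ℝ) ((u, u) : ℝ × ℝ) < δ := by
    rw [Prod.dist_eq]
    simp only [dist_self]
    rw [Real.dist_eq, abs_of_nonneg (by linarith : (0:ℝ) ≤ v - u)]
    exact max_lt hδ hdiff1
  have := H (u, v) hKuv (u, u) hKuu hdist
  simp only [hω₂.1 u ⟨hau, hub⟩] at this
  rw [Real.dist_eq, sub_zero] at this
  exact le_of_lt (lt_of_le_of_lt (le_abs_self _) this)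

lemma SewPartition.bounds {s t : ℝ} (P : SewPartition s t) : ∀ i ≤ P.n, s ≤ P.t i ∧ P.t i ≤ t := by
  intro i hi
  constructor
  · have h := chain_mono P.mono 0 i (by omega) hi
    rw [P.first] at h; exact h
  · have h := chain_mono P.mono i P.n hi le_rfl
    rw [P.last] at h; exact h

lemma exists_fine {s t : ℝ} (hst : s ≤ t) {δ : ℝ} (hδ : 0 < δ) :
    ∃ P : SewPartition s t, P.fine δ := by
  obtain ⟨n, hnpos, hltn⟩ : ∃ n : ℕ, 0 < n ∧ (t - s) / δ < n :=
    ⟨⌊(t - s) / δ⌋₊ + 1, by omega, by push_cast; exact Nat.lt_floor_add_one _⟩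
  have hq : 0 ≤ (t - s) / n := div_nonneg (by linarith) (by positivity)
  have key : (t - s) / n < δ := by
    rw [div_lt_iff₀ (by positivity : (0:ℝ) < (n:ℝ))]
    calc t - s = ((t-s)/δ) * δ := by field_simp
      _ < n * δ := mul_lt_mul_of_pos_right hltn hδ
      _ = δ * n := by ring
  refine ⟨⟨n, fun i => s + i * ((t - s) / n), hnpos, by norm_num, ?_, ?_⟩, ?_⟩
  · show s + n * ((t - s) / n) = t
    field_simp; ring
  · intro i hi
    show s + i * ((t - s) / n) ≤ s + (i+1 : ℕ) * ((t - s) / n)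
    have h1 : (i : ℝ) ≤ ((i:ℕ) + 1 : ℕ) := by push_cast; linarith
    have := mul_le_mul_of_nonneg_right h1 hq
    linarith
  · intro i hi
    show s + (i+1 : ℕ) * ((t - s) / n) - (s + i * ((t - s) / n)) < δ
    push_cast
    calc s + ((i:ℝ)+1) * ((t-s)/n) - (s + i * ((t-s)/n)) = (t-s)/n := by ring
      _ < δ := key

def SewPartition.concat {s u t : ℝ} (P : SewPartition s u) (Q : SewPartition u t) : SewPartition s t where
  n := P.n + Q.n
  t i := if i < P.n then P.t i else Q.t (i - P.n)
  npos := by have := P.npos; omega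
  first := by
    show (if 0 < P.n then P.t 0 else Q.t (0 - P.n)) = s
    rw [if_pos P.npos]; exact P.first
  last := by
    show (if P.n + Q.n < P.n then P.t (P.n + Q.n) else Q.t (P.n + Q.n - P.n)) = t
    rw [if_neg (by omega)]
    have h : P.n + Q.n - P.n = Q.n := by omega
    rw [h]; exact Q.last
  mono := by
    intro i hi
    show (if i < P.n then P.t i else Q.t (i - P.n))
      ≤ (if i + 1 < P.n then P.t (i+1) else Q.t (i + 1 - P.n))
    rcases Nat.lt_or_ge (i+1) P.n with h | h
    · rw [if_pos (by omega : i < P.n), if_pos h]; exact P.mono i (by omega)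
    rcases Nat.lt_or_ge i P.n with h' | h'
    · rw [if_pos h', if_neg (by omega)]
      have h1 : i + 1 - P.n = 0 := by omega
      have h2 : P.t i ≤ P.t P.n := chain_mono P.mono i P.n (by omega) le_rfl
      rw [P.last] at h2
      rw [h1, Q.first]
      exact h2
    · rw [if_neg (by omega), if_neg (by omega)]
      have h1 : i + 1 - P.n = (i - P.n) + 1 := by omega
      rw [h1]
      exact Q.mono (i - P.n) (by omega)

lemma SewPartition.concat_n {s u t : ℝ} (P : SewPartition s u) (Q : SewPartition u t) :
    (P.concat Q).n = P.n + Q.n := rfl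

lemma SewPartition.concat_t_left {s u t : ℝ} (P : SewPartition s u) (Q : SewPartition u t)
    {i : ℕ} (hi : i ≤ P.n) : (P.concat Q).t i = P.t i := by
  show (if i < P.n then P.t i else Q.t (i - P.n)) = P.t i
  rcases Nat.lt_or_ge i P.n with h | h
  · exact if_pos h
  · have hie : i = P.n := by omega
    rw [if_neg (by omega), hie]
    have h0 : P.n - P.n = 0 := by omega
    rw [h0, Q.first, P.last]

lemma SewPartition.concat_t_right {s u t : ℝ} (P : SewPartition s u) (Q : SewPartition u t)
    {i : ℕ} (hi : P.n ≤ i) : (P.concat Q).t i = Q.t (i - P.n) := by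
  show (if i < P.n then P.t i else Q.t (i - P.n)) = Q.t (i - P.n)
  exact if_neg (by omega)

lemma SewPartition.concat_fine {s u t : ℝ} (P : SewPartition s u) (Q : SewPartition u t) {δ : ℝ}
    (hP : P.fine δ) (hQ : Q.fine δ) : (P.concat Q).fine δ := by
  intro i hi
  rw [P.concat_n Q] at hi
  rcases Nat.lt_or_ge i P.n with h | h
  · rw [P.concat_t_left Q (show i + 1 ≤ P.n by omega), P.concat_t_left Q (show i ≤ P.n by omega)]
    exact hP i h
  · rw [P.concat_t_right Q (show P.n ≤ i + 1 by omega), P.concat_t_right Q h]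
    have h1 : i + 1 - P.n = (i - P.n) + 1 := by omega
    rw [h1]
    exact hQ (i - P.n) (by omega)

lemma SewPartition.concat_RS {E : Type*} [AddCommMonoid E] {s u t : ℝ} (μ : ℝ → ℝ → E)
    (P : SewPartition s u) (Q : SewPartition u t) :
    ∑ i ∈ range (P.concat Q).n, μ ((P.concat Q).t i) ((P.concat Q).t (i+1))
      = (∑ i ∈ range P.n, μ (P.t i) (P.t (i+1)))
        + ∑ i ∈ range Q.n, μ (Q.t i) (Q.t (i+1)) := by
  rw [P.concat_n Q, Finset.sum_range_add]
  congr 1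
  · refine Finset.sum_congr rfl (fun i hi => ?_)
    simp only [Finset.mem_range] at hi
    rw [P.concat_t_left Q (show i + 1 ≤ P.n by omega), P.concat_t_left Q (show i ≤ P.n by omega)]
  · refine Finset.sum_congr rfl (fun i hi => ?_)
    rw [P.concat_t_right Q (show P.n ≤ P.n + i by omega),
      P.concat_t_right Q (show P.n ≤ P.n + i + 1 by omega)]
    have h1 : P.n + i - P.n = i := by omega
    have h2 : P.n + i + 1 - P.n = i + 1 := by omega
    rw [h1, h2]

lemma med_eq {E : Type*} [Zero E] (μ : ℝ → ℝ → E) (x₁ x₂ y₁ y₂ : ℝ) (hx : x₁ ≤ x₂)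
    (hy : y₁ ≤ y₂) (d1 : μ x₁ x₁ = 0) (d2 : μ x₂ x₂ = 0) (d3 : μ y₁ y₁ = 0)
    (d4 : μ y₂ y₂ = 0) :
    μ (max x₁ (min y₁ x₂)) (max x₁ (min y₂ x₂))
      = μ (max y₁ (min x₁ y₂)) (max y₁ (min x₂ y₂)) := by
  rcases le_or_gt y₂ x₁ with h | h
  · have e1 : max x₁ (min y₁ x₂) = x₁ := max_eq_left ((min_le_left _ _).trans (hy.trans h))
    have e2 : max x₁ (min y₂ x₂) = x₁ := max_eq_left ((min_le_left _ _).trans h)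
    have e3 : min x₁ y₂ = y₂ := min_eq_right h
    have e4 : min x₂ y₂ = y₂ := min_eq_right (h.trans hx)
    rw [e1, e2, e3, e4, max_eq_right hy, d1, d4]
  rcases le_or_gt x₂ y₁ with h2 | h2
  · have e1 : min y₁ x₂ = x₂ := min_eq_right h2
    have e2 : min y₂ x₂ = x₂ := min_eq_right (h2.trans hy)
    have e3 : max y₁ (min x₁ y₂) = y₁ := max_eq_left ((min_le_left _ _).trans (hx.trans h2))
    have e4 : min x₂ y₂ = x₂ := min_eq_left (h2.trans hy)
    rw [e1, e2, e3, e4, max_eq_right hx, max_eq_left h2, d2, d3]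
  · have e1 : min y₁ x₂ = y₁ := min_eq_left h2.le
    have e2 : max x₁ (min y₂ x₂) = min y₂ x₂ := max_eq_right (le_min h.le hx)
    have e3 : min x₁ y₂ = x₁ := min_eq_left h.le
    have e4 : max y₁ (min x₂ y₂) = min x₂ y₂ := max_eq_right (le_min h2.le hy)
    rw [e1, e2, e3, e4, min_comm y₂ x₂, max_comm y₁ x₁]

lemma g_summable {γ : ℝ} (hγ : 1 < γ) : Summable (fun k : ℕ => (2 / ((k:ℝ) + 1)) ^ γ) := by
  have h := Real.summable_one_div_nat_rpow.mpr hγ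
  have h1 : Summable (fun n : ℕ => 1 / ((n:ℝ) + 1) ^ γ) := by
    have h2 := (summable_nat_add_iff 1).mpr h
    refine h2.congr (fun n => ?_)
    push_cast
    ring
  refine (h1.mul_left (2 ^ γ)).congr (fun n => ?_)
  rw [Real.div_rpow (by norm_num) (by positivity)]
  field_simp

lemma core {α₁ α₂ : ℝ} (h₁ : 0 < α₁) (h₂ : 0 < α₂) (hsum : 1 < α₁ + α₂)
    {d : ℕ} {a b : ℝ} {μ : ℝ → ℝ → Euc d} {ω₁ ω₂ : ℝ → ℝ → ℝ}
    (hω₁ : IsControl a b ω₁) (hω₂ : IsControl a b ω₂) (hreg : IsRegularControl a b ω₂)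
    (hchen : ∀ s u t : ℝ, a ≤ s → s ≤ u → u ≤ t → t ≤ b →
      ‖μ s t - μ s u - μ u t‖ ≤ ω₁ s u ^ α₁ * ω₂ u t ^ α₂)
    (s t : ℝ) (has : a ≤ s) (hst : s ≤ t) (htb : t ≤ b) :
    ∃ I : Euc d,
      (∀ ε > 0, ∃ δ > 0, ∀ P : SewPartition s t, P.fine δ →
        ‖(∑ i ∈ Finset.range P.n, μ (P.t i) (P.t (i + 1))) - I‖ < ε) ∧
      ‖I - μ s t‖ ≤ ((∑' k : ℕ, (2 / ((k:ℝ)+1)) ^ (α₁+α₂)) + 1)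
        * (ω₁ s t ^ α₁ * ω₂ s t ^ α₂) := by
  -- basic exponent facts
  set γ := α₁ + α₂ with hγdef
  set θ := α₁ / γ with hθdef
  have hγ : 1 < γ := hsum
  have hγ0 : (0:ℝ) < γ := by linarith
  have hθ : 0 < θ := by positivity
  have hθ1 : θ < 1 := by
    rw [hθdef, div_lt_one hγ0]; linarith
  have hθγ : θ * γ = α₁ := by
    rw [hθdef]; field_simp
  have hθγ' : (1 - θ) * γ = α₂ := by linear_combination hγdef - hθγ
  set ω : ℝ → ℝ → ℝ := fun u v => ω₁ u v ^ θ * ω₂ u v ^ (1 - θ) with hωdef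
  have hω : IsControl a b ω := omega_control hω₁ hω₂ hθ hθ1
  have hdiag : ∀ z, a ≤ z → z ≤ b → μ z z = 0 := by
    intro z h1 h2
    have h := hchen z z z h1 le_rfl le_rfl h2
    rw [hω₁.1 z ⟨h1, h2⟩, Real.zero_rpow h₁.ne', zero_mul] at h
    have : ‖μ z z‖ ≤ 0 := by
      have e : μ z z - μ z z - μ z z = -(μ z z) := by abel
      rw [e, norm_neg] at h; exact h
    simpa using le_antisymm this (norm_nonneg _)
  have hωγ : ∀ u v : ℝ, a ≤ u → u ≤ v → v ≤ b → ω u v ^ γ = ω₁ u v ^ α₁ * ω₂ u v ^ α₂ := by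
    intro u v h1 h2 h3
    have n1 := hω₁.2.1 u v h1 h2 h3
    have n2 := hω₂.2.1 u v h1 h2 h3
    rw [hωdef]
    simp only
    rw [Real.mul_rpow (by positivity) (by positivity), ← Real.rpow_mul n1, ← Real.rpow_mul n2,
      hθγ, hθγ']
  have hdef : ∀ x u y : ℝ, a ≤ x → x ≤ u → u ≤ y → y ≤ b →
      ‖μ x y - μ x u - μ u y‖ ≤ ω x y ^ γ := by
    intro x u y hx hxu huy hyb
    calc ‖μ x y - μ x u - μ u y‖ ≤ ω₁ x u ^ α₁ * ω₂ u y ^ α₂ := hchen x u y hx hxu huy hyb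
      _ ≤ ω₁ x y ^ α₁ * ω₂ x y ^ α₂ := by
          refine mul_le_mul (Real.rpow_le_rpow (hω₁.2.1 x u hx hxu (huy.trans hyb))
            (hω₁.2.2.1 x x u y hx le_rfl hxu huy hyb) h₁.le)
            (Real.rpow_le_rpow (hω₂.2.1 u y (hx.trans hxu) huy hyb)
            (hω₂.2.2.1 x u y y hx hxu huy le_rfl hyb) h₂.le)
            (Real.rpow_nonneg (hω₂.2.1 u y (hx.trans hxu) huy hyb) _)
            (Real.rpow_nonneg (hω₁.2.1 x y hx (hxu.trans huy) hyb) _)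
      _ = ω x y ^ γ := (hωγ x y hx (hxu.trans huy) hyb).symm
  set T : ℝ := ∑' k : ℕ, (2 / ((k:ℝ)+1)) ^ γ with hTdef
  have hT0 : 0 ≤ T := tsum_nonneg (fun k => by positivity)
  have hTsum : ∀ m : ℕ, ∑ k ∈ range m, (2 / ((k:ℝ)+1)) ^ γ ≤ T :=
    fun m => Summable.sum_le_tsum (range m) (fun k _ => by positivity) (g_summable hγ)
  set C₀ : ℝ := T + 1 with hC₀def
  have hC₀ : 0 < C₀ := by linarith
  have hmax : ∀ (n : ℕ) (c : ℕ → ℝ), a ≤ c 0 → c n ≤ b → (∀ i < n, c i ≤ c (i + 1)) →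
      ‖(∑ i ∈ range n, μ (c i) (c (i + 1))) - μ (c 0) (c n)‖ ≤ C₀ * ω (c 0) (c n) ^ γ := by
    intro n c h0 hb hc
    have h := maxIneq hγ hω hdef n c h0 hb hc
    have hωnn : 0 ≤ ω (c 0) (c n) ^ γ :=
      Real.rpow_nonneg (hω.2.1 _ _ h0 (chain_mono hc 0 n (by omega) le_rfl) hb) _
    calc ‖_‖ ≤ (∑ k ∈ range (n-1), (2 / ((k:ℝ)+1)) ^ γ) * ω (c 0) (c n) ^ γ := h
      _ ≤ C₀ * ω (c 0) (c n) ^ γ := by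
          refine mul_le_mul_of_nonneg_right ?_ hωnn
          exact (hTsum (n-1)).trans (by linarith)
  -- Cauchy estimate between two partitions
  have hPpt : ∀ (P : SewPartition s t) (i : ℕ), i ≤ P.n → a ≤ P.t i ∧ P.t i ≤ b :=
    fun P i hi => ⟨has.trans (P.bounds i hi).1, (P.bounds i hi).2.trans htb⟩
  have hpow : ∀ E x : ℝ, 0 ≤ E → 0 ≤ x → x ≤ E → x ^ γ ≤ E ^ (γ-1) * x := by
    intro E x hE hx hxE
    rcases eq_or_lt_of_le hx with h0 | h0
    · rw [← h0, Real.zero_rpow (by linarith : γ ≠ 0), mul_zero]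
    · calc x ^ γ = x ^ (γ-1) * x := by
            rw [show γ = (γ-1)+1 by ring, Real.rpow_add_one h0.ne']; ring_nf
        _ ≤ E ^ (γ-1) * x := mul_le_mul_of_nonneg_right
            (Real.rpow_le_rpow hx hxE (by linarith)) hx
  have hinner : ∀ (P Q : SewPartition s t) (i : ℕ), i < P.n →
      ‖(∑ j ∈ range Q.n, μ (max (P.t i) (min (Q.t j) (P.t (i+1))))
          (max (P.t i) (min (Q.t (j+1)) (P.t (i+1)))))
        - μ (P.t i) (P.t (i+1))‖ ≤ C₀ * ω (P.t i) (P.t (i+1)) ^ γ := by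
    intro P Q i hi
    set c : ℕ → ℝ := fun j => max (P.t i) (min (Q.t j) (P.t (i+1))) with hcdef
    have e0 : c 0 = P.t i := by
      rw [hcdef]
      simp only [Q.first]
      rw [min_eq_left ((P.bounds i (by omega)).1.trans (P.mono i hi)), max_eq_left
        (P.bounds i (by omega)).1]
    have en : c Q.n = P.t (i+1) := by
      rw [hcdef]
      simp only [Q.last]
      rw [min_eq_right (P.bounds (i+1) (by omega)).2, max_eq_right (P.mono i hi)]
    have hchain : ∀ j < Q.n, c j ≤ c (j+1) := by
      intro j hj
      exact max_le_max le_rfl (min_le_min (Q.mono j hj) le_rfl)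
    have h := hmax Q.n c (by rw [e0]; exact (hPpt P i (by omega)).1)
      (by rw [en]; exact (hPpt P (i+1) (by omega)).2) hchain
    rw [e0, en] at h
    exact h
  have honeside : ∀ (P Q : SewPartition s t) (E : ℝ), 0 ≤ E →
      (∀ i < P.n, ω (P.t i) (P.t (i+1)) ≤ E) →
      ‖(∑ i ∈ range P.n, ∑ j ∈ range Q.n, μ (max (P.t i) (min (Q.t j) (P.t (i+1))))
          (max (P.t i) (min (Q.t (j+1)) (P.t (i+1)))))
        - ∑ i ∈ range P.n, μ (P.t i) (P.t (i+1))‖ ≤ C₀ * E ^ (γ-1) * ω s t := by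
    intro P Q E hE hmesh
    rw [← Finset.sum_sub_distrib]
    calc ‖∑ i ∈ range P.n, ((∑ j ∈ range Q.n, μ (max (P.t i) (min (Q.t j) (P.t (i+1))))
            (max (P.t i) (min (Q.t (j+1)) (P.t (i+1))))) - μ (P.t i) (P.t (i+1)))‖
        ≤ ∑ i ∈ range P.n, ‖(∑ j ∈ range Q.n, μ (max (P.t i) (min (Q.t j) (P.t (i+1))))
            (max (P.t i) (min (Q.t (j+1)) (P.t (i+1))))) - μ (P.t i) (P.t (i+1))‖ :=
          norm_sum_le _ _
      _ ≤ ∑ i ∈ range P.n, C₀ * E ^ (γ-1) * ω (P.t i) (P.t (i+1)) := by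
          refine Finset.sum_le_sum (fun i hi => ?_)
          simp only [Finset.mem_range] at hi
          refine (hinner P Q i hi).trans ?_
          rw [mul_assoc]
          refine mul_le_mul_of_nonneg_left ?_ hC₀.le
          exact hpow E _ hE (hω.2.1 _ _ (hPpt P i (by omega)).1 (P.mono i hi)
            (hPpt P (i+1) (by omega)).2) (hmesh i hi)
      _ = C₀ * E ^ (γ-1) * ∑ i ∈ range P.n, ω (P.t i) (P.t (i+1)) := by
          rw [Finset.mul_sum]
      _ ≤ C₀ * E ^ (γ-1) * ω s t := by
          refine mul_le_mul_of_nonneg_left ?_ (by positivity)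
          have h := chainSum hω P.mono (hPpt P 0 (by omega)).1 (hPpt P P.n le_rfl).2
          rw [P.first, P.last] at h
          exact h
  have hcauchy : ∀ (P Q : SewPartition s t) (E : ℝ), 0 ≤ E →
      (∀ i < P.n, ω (P.t i) (P.t (i+1)) ≤ E) →
      (∀ j < Q.n, ω (Q.t j) (Q.t (j+1)) ≤ E) →
      ‖(∑ i ∈ range P.n, μ (P.t i) (P.t (i+1))) - ∑ j ∈ range Q.n, μ (Q.t j) (Q.t (j+1))‖
        ≤ 2 * (C₀ * E ^ (γ-1) * ω s t) := by
    intro P Q E hE hP hQ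
    have hsym : (∑ i ∈ range P.n, ∑ j ∈ range Q.n, μ (max (P.t i) (min (Q.t j) (P.t (i+1))))
          (max (P.t i) (min (Q.t (j+1)) (P.t (i+1)))))
        = ∑ j ∈ range Q.n, ∑ i ∈ range P.n, μ (max (Q.t j) (min (P.t i) (Q.t (j+1))))
          (max (Q.t j) (min (P.t (i+1)) (Q.t (j+1)))) := by
      rw [Finset.sum_comm]
      refine Finset.sum_congr rfl (fun j hj => Finset.sum_congr rfl (fun i hi => ?_))
      simp only [Finset.mem_range] at hi hj
      exact med_eq μ (P.t i) (P.t (i+1)) (Q.t j) (Q.t (j+1)) (P.mono i hi) (Q.mono j hj)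
        (hdiag _ (hPpt P i (by omega)).1 (hPpt P i (by omega)).2)
        (hdiag _ (hPpt P (i+1) (by omega)).1 (hPpt P (i+1) (by omega)).2)
        (hdiag _ (hPpt Q j (by omega)).1 (hPpt Q j (by omega)).2)
        (hdiag _ (hPpt Q (j+1) (by omega)).1 (hPpt Q (j+1) (by omega)).2)
    have h1 := honeside P Q E hE hP
    have h2 := honeside Q P E hE hQ
    rw [hsym] at h1
    set J := ∑ j ∈ range Q.n, ∑ i ∈ range P.n, μ (max (Q.t j) (min (P.t i) (Q.t (j+1))))
      (max (Q.t j) (min (P.t (i+1)) (Q.t (j+1)))) with hJ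
    calc ‖(∑ i ∈ range P.n, μ (P.t i) (P.t (i+1))) - ∑ j ∈ range Q.n, μ (Q.t j) (Q.t (j+1))‖
        = ‖-(J - ∑ i ∈ range P.n, μ (P.t i) (P.t (i+1)))
            + (J - ∑ j ∈ range Q.n, μ (Q.t j) (Q.t (j+1)))‖ := by
          congr 1; abel
      _ ≤ ‖J - ∑ i ∈ range P.n, μ (P.t i) (P.t (i+1))‖
          + ‖J - ∑ j ∈ range Q.n, μ (Q.t j) (Q.t (j+1))‖ := by
          refine (norm_add_le _ _).trans ?_
          rw [norm_neg]
      _ ≤ C₀ * E ^ (γ-1) * ω s t + C₀ * E ^ (γ-1) * ω s t := add_le_add h1 h2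
      _ = 2 * (C₀ * E ^ (γ-1) * ω s t) := by ring
  -- mesh-based Cauchy property
  have hW : 0 ≤ ω s t := hω.2.1 s t has hst htb
  have hM : 0 ≤ ω₁ s t := hω₁.2.1 s t has hst htb
  have claimA : ∀ ε > 0, ∃ δ > 0, ∀ P Q : SewPartition s t, P.fine δ → Q.fine δ →
      ‖(∑ i ∈ range P.n, μ (P.t i) (P.t (i+1))) - ∑ j ∈ range Q.n, μ (Q.t j) (Q.t (j+1))‖
        < ε := by
    intro ε hε
    set M := ω₁ s t with hMdef
    set W := ω s t with hWdef
    set p := (1-θ)*(γ-1) with hpdef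
    have hp : 0 < p := mul_pos (by linarith) (by linarith)
    set K := 2 * (C₀ * (M^θ) ^ (γ-1) * W) with hKdef
    have hK : 0 ≤ K := by
      have h1 : 0 ≤ (M^θ) ^ (γ-1) := Real.rpow_nonneg (Real.rpow_nonneg hM _) _
      have := mul_nonneg (mul_nonneg hC₀.le h1) hW
      linarith
    set τ := ε / (K+1) with hτdef
    have hτ : 0 < τ := div_pos hε (by linarith)
    set e := min 1 (τ ^ (1/p)) with hedef
    have he : 0 < e := lt_min one_pos (Real.rpow_pos_of_pos hτ _)
    have hep : e ^ p ≤ τ := by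
      calc e ^ p ≤ (τ ^ (1/p)) ^ p :=
            Real.rpow_le_rpow he.le (min_le_right _ _) hp.le
        _ = τ := by
            rw [← Real.rpow_mul hτ.le, one_div_mul_cancel hp.ne', Real.rpow_one]
    obtain ⟨δ, hδ, hsmall⟩ := reg_small hω₂ hreg e he
    refine ⟨δ, hδ, fun P Q hPf hQf => ?_⟩
    set E := M^θ * e^(1-θ) with hEdef
    have hE : 0 ≤ E := mul_nonneg (Real.rpow_nonneg hM _) (Real.rpow_nonneg he.le _)
    have hmesh : ∀ (R : SewPartition s t), R.fine δ → ∀ i < R.n,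
        ω (R.t i) (R.t (i+1)) ≤ E := by
      intro R hRf i hi
      have hb1 := (R.bounds i (le_of_lt hi)).1
      have hb2 := (R.bounds (i+1) hi).2
      have hω1le : ω₁ (R.t i) (R.t (i+1)) ≤ M :=
        hω₁.2.2.1 s (R.t i) (R.t (i+1)) t has hb1 (R.mono i hi) hb2 htb
      have hω2le : ω₂ (R.t i) (R.t (i+1)) ≤ e :=
        hsmall _ _ (has.trans hb1) (R.mono i hi) (hb2.trans htb) (hRf i hi)
      have n1 := hω₁.2.1 (R.t i) (R.t (i+1)) (has.trans hb1) (R.mono i hi) (hb2.trans htb)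
      have n2 := hω₂.2.1 (R.t i) (R.t (i+1)) (has.trans hb1) (R.mono i hi) (hb2.trans htb)
      exact mul_le_mul (Real.rpow_le_rpow n1 hω1le hθ.le)
        (Real.rpow_le_rpow n2 hω2le (by linarith)) (Real.rpow_nonneg n2 _)
        (Real.rpow_nonneg hM _)
    have hsplitE : E ^ (γ-1) = (M^θ) ^ (γ-1) * e ^ p := by
      rw [hEdef, Real.mul_rpow (Real.rpow_nonneg hM _) (Real.rpow_nonneg he.le _),
        ← Real.rpow_mul he.le, ← hpdef]
    have hKτ : (K+1) * τ = ε := by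
      rw [hτdef]; field_simp
    calc ‖(∑ i ∈ range P.n, μ (P.t i) (P.t (i+1))) - ∑ j ∈ range Q.n, μ (Q.t j) (Q.t (j+1))‖
        ≤ 2 * (C₀ * E ^ (γ-1) * W) := hcauchy P Q E hE (hmesh P hPf) (hmesh Q hQf)
      _ = K * e ^ p := by rw [hsplitE, hKdef]; ring
      _ ≤ K * τ := mul_le_mul_of_nonneg_left hep hK
      _ < (K+1) * τ := by
          have := mul_lt_mul_of_pos_right (show K < K + 1 by linarith) hτ
          exact this
      _ = ε := hKτ
  -- construct the limit
  have hfineseq : ∀ k : ℕ, ∃ P : SewPartition s t, P.fine (1/((k:ℝ)+1)) :=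
    fun k => exists_fine hst (by positivity)
  choose Ps hPs using hfineseq
  set x : ℕ → Euc d := fun k => ∑ i ∈ range (Ps k).n, μ ((Ps k).t i) ((Ps k).t (i+1))
    with hxdef
  have hfine_of_le : ∀ (k : ℕ) (δ : ℝ), 0 < δ → 1/δ < (k:ℝ)+1 → (Ps k).fine δ := by
    intro k δ hδ hk i hi
    refine lt_of_lt_of_le (hPs k i hi) ?_
    rw [div_le_iff₀ (by positivity : (0:ℝ) < (k:ℝ)+1)]
    rw [div_lt_iff₀ hδ] at hk
    nlinarith
  have hcs : CauchySeq x := by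
    rw [Metric.cauchySeq_iff]
    intro ε hε
    obtain ⟨δ, hδ, hA⟩ := claimA ε hε
    obtain ⟨N, hN⟩ := exists_nat_gt (1/δ)
    refine ⟨N, fun m hm k hk => ?_⟩
    rw [dist_eq_norm]
    have hm' : (1:ℝ)/δ < (m:ℝ)+1 := by
      have : (N:ℝ) ≤ m := Nat.cast_le.mpr hm
      linarith
    have hk' : (1:ℝ)/δ < (k:ℝ)+1 := by
      have : (N:ℝ) ≤ k := Nat.cast_le.mpr hk
      linarith
    exact hA (Ps m) (Ps k) (hfine_of_le m δ hδ hm') (hfine_of_le k δ hδ hk')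
  obtain ⟨I, hI⟩ := cauchySeq_tendsto_of_complete hcs
  have hconv : ∀ ε > 0, ∃ δ > 0, ∀ P : SewPartition s t, P.fine δ →
      ‖(∑ i ∈ Finset.range P.n, μ (P.t i) (P.t (i + 1))) - I‖ < ε := by
    intro ε hε
    obtain ⟨δ, hδ, hA⟩ := claimA (ε/2) (by linarith)
    refine ⟨δ, hδ, fun P hPf => ?_⟩
    obtain ⟨N, hN⟩ := exists_nat_gt (1/δ)
    obtain ⟨N₂, hN₂⟩ := Metric.tendsto_atTop.mp hI (ε/2) (by linarith)
    set k := max N N₂ with hkdef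
    have hk' : (1:ℝ)/δ < (k:ℝ)+1 := by
      have : (N:ℝ) ≤ k := Nat.cast_le.mpr (le_max_left _ _)
      linarith
    have h1 : ‖(∑ i ∈ range P.n, μ (P.t i) (P.t (i+1))) - x k‖ < ε/2 :=
      hA P (Ps k) hPf (hfine_of_le k δ hδ hk')
    have h2 : ‖x k - I‖ < ε/2 := by
      rw [← dist_eq_norm]
      exact hN₂ k (le_max_right _ _)
    calc ‖(∑ i ∈ range P.n, μ (P.t i) (P.t (i+1))) - I‖
        = ‖((∑ i ∈ range P.n, μ (P.t i) (P.t (i+1))) - x k) + (x k - I)‖ := by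
          congr 1; abel
      _ ≤ ‖(∑ i ∈ range P.n, μ (P.t i) (P.t (i+1))) - x k‖ + ‖x k - I‖ := norm_add_le _ _
      _ < ε/2 + ε/2 := add_lt_add h1 h2
      _ = ε := by ring
  refine ⟨I, hconv, ?_⟩
  rw [← hωγ s t has hst htb]
  refine le_of_forall_pos_le_add (fun ε hε => ?_)
  obtain ⟨δ, hδ, hc⟩ := hconv ε hε
  obtain ⟨P, hPf⟩ := exists_fine hst hδ
  have h1 := hc P hPf
  have h2 := hmax P.n P.t (hPpt P 0 (by omega)).1 (hPpt P P.n le_rfl).2 P.mono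
  rw [P.first, P.last] at h2
  calc ‖I - μ s t‖
      ≤ ‖I - ∑ i ∈ range P.n, μ (P.t i) (P.t (i+1))‖
        + ‖(∑ i ∈ range P.n, μ (P.t i) (P.t (i+1))) - μ s t‖ := by
        have e : I - μ s t = (I - ∑ i ∈ range P.n, μ (P.t i) (P.t (i+1)))
            + ((∑ i ∈ range P.n, μ (P.t i) (P.t (i+1))) - μ s t) := by abel
        rw [e]; exact norm_add_le _ _
    _ ≤ ε + C₀ * ω s t ^ γ := by
        refine add_le_add ?_ h2
        rw [norm_sub_rev]
        exact h1.le
    _ = C₀ * ω s t ^ γ + ε := by ring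

end SewingAux

/-- **Sewing lemma (Proposition A.1, after Friz–Zhang).**
Let `μ : Δ_{a,b} → ℝ^d` satisfy `|μ_{s,t} - μ_{s,u} - μ_{u,t}| ≤ ω₁(s,u)^{α₁} ω₂(u,t)^{α₂}`
for controls `ω₁, ω₂` with `ω₂` regular and exponents `α₁ + α₂ > 1`.  Then for every
`[s,t] ⊆ [a,b]` the Riemann sums `μ_π` converge, as the mesh of `π` tends to `0`, to a
limit `I_s^t(μ)` with `|I_s^t(μ) - μ_{s,t}| ≤ C ω₁(s,t⁻)^{α₁} ω₂(s,t)^{α₂}`, for a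
constant `C` depending only on `α₁, α₂`; here `ω₁(s,t⁻) = sup_{u ∈ [s,t)} ω₁(s,u)` is
the left limit in `t` of `ω₁(s, ·)`. -/
theorem sewing_lemma_with_controls
    (α₁ α₂ : ℝ) (h₁ : 0 < α₁) (h₂ : 0 < α₂) (hsum : 1 < α₁ + α₂) :
    ∃ C : ℝ, 0 < C ∧
      ∀ (d : ℕ) (a b : ℝ), a ≤ b →
      ∀ (μ : ℝ → ℝ → Euc d) (ω₁ ω₂ : ℝ → ℝ → ℝ),
        IsControl a b ω₁ → IsControl a b ω₂ → IsRegularControl a b ω₂ →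
        (∀ s u t : ℝ, a ≤ s → s ≤ u → u ≤ t → t ≤ b →
          ‖μ s t - μ s u - μ u t‖ ≤ ω₁ s u ^ α₁ * ω₂ u t ^ α₂) →
        ∀ s t : ℝ, a ≤ s → s ≤ t → t ≤ b →
          ∃ I : Euc d,
            (∀ ε > 0, ∃ δ > 0, ∀ P : SewPartition s t, P.fine δ →
              ‖(∑ i ∈ Finset.range P.n, μ (P.t i) (P.t (i + 1))) - I‖ < ε) ∧
            ‖I - μ s t‖ ≤ C * sSup (ω₁ s '' Ico s t) ^ α₁ * ω₂ s t ^ α₂ := by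
  have hTnn : (0:ℝ) ≤ ∑' k : ℕ, (2 / ((k:ℝ)+1)) ^ (α₁+α₂) :=
    tsum_nonneg (fun k => by positivity)
  refine ⟨(∑' k : ℕ, (2 / ((k:ℝ)+1)) ^ (α₁+α₂)) + 1, by linarith, ?_⟩
  intro d a b hab μ ω₁ ω₂ hω₁ hω₂ hreg hchen s t has hst htb
  set C₀ : ℝ := (∑' k : ℕ, (2 / ((k:ℝ)+1)) ^ (α₁+α₂)) + 1 with hC₀def
  have hC₀ : 0 < C₀ := by rw [hC₀def]; linarith
  obtain ⟨I, hIconv, hIb⟩ := core h₁ h₂ hsum hω₁ hω₂ hreg hchen s t has hst htb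
  rw [← hC₀def] at hIb
  refine ⟨I, hIconv, ?_⟩
  rcases eq_or_lt_of_le hst with rfl | hlt
  · rw [Set.Ico_self, Set.image_empty, Real.sSup_empty, Real.zero_rpow h₁.ne',
      mul_zero, zero_mul]
    rw [hω₁.1 s ⟨has, htb⟩, Real.zero_rpow h₁.ne', zero_mul, mul_zero] at hIb
    exact hIb
  · set σ := sSup (ω₁ s '' Ico s t) with hσdef
    have hbdd : BddAbove (ω₁ s '' Ico s t) := by
      refine ⟨ω₁ s t, ?_⟩
      rintro y ⟨u, hu, rfl⟩
      exact hω₁.2.2.1 s s u t has le_rfl hu.1 hu.2.le htb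
    have hσ0 : 0 ≤ σ := by
      have h := le_csSup hbdd ⟨s, ⟨le_rfl, hlt⟩, rfl⟩
      rw [hω₁.1 s ⟨has, hst.trans htb⟩] at h
      exact h
    have hσle : ∀ u, s ≤ u → u < t → ω₁ s u ≤ σ :=
      fun u hu1 hu2 => le_csSup hbdd ⟨u, ⟨hu1, hu2⟩, rfl⟩
    have hω₁nn := hω₁.2.1 s t has hst htb
    have hω₂nn := hω₂.2.1 s t has hst htb
    refine le_of_forall_pos_le_add (fun ε hε => ?_)
    set D : ℝ := C₀ * ω₁ s t ^ α₁ + σ ^ α₁ + 1 with hDdef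
    have hD : 0 < D := by
      have h1 : 0 ≤ ω₁ s t ^ α₁ := Real.rpow_nonneg hω₁nn _
      have h2 : 0 ≤ σ ^ α₁ := Real.rpow_nonneg hσ0 _
      have := mul_nonneg hC₀.le h1
      rw [hDdef]; linarith
    set τ : ℝ := ε / D with hτdef
    have hτ : 0 < τ := div_pos hε hD
    set e : ℝ := τ ^ (1/α₂) with hedef
    have he : 0 < e := Real.rpow_pos_of_pos hτ _
    obtain ⟨δ', hδ', hsmall⟩ := reg_small hω₂ hreg e he
    set u : ℝ := max s (t - δ'/2) with hudef
    have hsu : s ≤ u := le_max_left _ _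
    have hut : u < t := max_lt hlt (by linarith)
    have htu : t - u < δ' := by
      have h := le_max_right s (t - δ'/2)
      rw [← hudef] at h
      linarith
    have hω₂ut : ω₂ u t ≤ e := hsmall u t (has.trans hsu) hut.le htb htu
    have hω₂utnn := hω₂.2.1 u t (has.trans hsu) hut.le htb
    have hω₂utα : ω₂ u t ^ α₂ ≤ τ := by
      calc ω₂ u t ^ α₂ ≤ e ^ α₂ := Real.rpow_le_rpow hω₂utnn hω₂ut h₂.le
        _ = τ := by
            rw [hedef, ← Real.rpow_mul hτ.le, one_div_mul_cancel h₂.ne', Real.rpow_one]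
    obtain ⟨I₁, hI₁conv, hI₁b⟩ := core h₁ h₂ hsum hω₁ hω₂ hreg hchen s u has hsu
      (hut.le.trans htb)
    obtain ⟨I₂, hI₂conv, hI₂b⟩ := core h₁ h₂ hsum hω₁ hω₂ hreg hchen u t (has.trans hsu)
      hut.le htb
    rw [← hC₀def] at hI₁b hI₂b
    have hadd : I = I₁ + I₂ := by
      have h0 : ‖I - (I₁ + I₂)‖ ≤ 0 := by
        refine le_of_forall_pos_le_add (fun ε' hε' => ?_)
        obtain ⟨δ₀, hδ₀, hc₀⟩ := hIconv (ε'/3) (by linarith)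
        obtain ⟨δ₁, hδ₁, hc₁⟩ := hI₁conv (ε'/3) (by linarith)
        obtain ⟨δ₂, hδ₂, hc₂⟩ := hI₂conv (ε'/3) (by linarith)
        obtain ⟨P, hPf⟩ := exists_fine hsu (lt_min hδ₀ hδ₁)
        obtain ⟨Q, hQf⟩ := exists_fine hut.le (lt_min hδ₀ hδ₂)
        have hPδ₀ : P.fine δ₀ := fun i hi => lt_of_lt_of_le (hPf i hi) (min_le_left _ _)
        have hPδ₁ : P.fine δ₁ := fun i hi => lt_of_lt_of_le (hPf i hi) (min_le_right _ _)
        have hQδ₀ : Q.fine δ₀ := fun i hi => lt_of_lt_of_le (hQf i hi) (min_le_left _ _)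
        have hQδ₂ : Q.fine δ₂ := fun i hi => lt_of_lt_of_le (hQf i hi) (min_le_right _ _)
        have hR := hc₀ (P.concat Q) (P.concat_fine Q hPδ₀ hQδ₀)
        rw [SewPartition.concat_RS] at hR
        have hA := hc₁ P hPδ₁
        have hB := hc₂ Q hQδ₂
        set SP := ∑ i ∈ Finset.range P.n, μ (P.t i) (P.t (i+1)) with hSP
        set SQ := ∑ i ∈ Finset.range Q.n, μ (Q.t i) (Q.t (i+1)) with hSQ
        calc ‖I - (I₁ + I₂)‖
            = ‖-(SP + SQ - I) + (SP - I₁) + (SQ - I₂)‖ := by congr 1; abel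
          _ ≤ ‖-(SP + SQ - I) + (SP - I₁)‖ + ‖SQ - I₂‖ := norm_add_le _ _
          _ ≤ ‖-(SP + SQ - I)‖ + ‖SP - I₁‖ + ‖SQ - I₂‖ :=
              add_le_add_left (norm_add_le _ _) _
          _ = ‖SP + SQ - I‖ + ‖SP - I₁‖ + ‖SQ - I₂‖ := by rw [norm_neg]
          _ ≤ ε'/3 + ε'/3 + ε'/3 := add_le_add (add_le_add hR.le hA.le) hB.le
          _ ≤ 0 + ε' := by linarith
      have := norm_le_zero_iff.mp h0
      exact sub_eq_zero.mp this
    rw [hadd]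
    have hchen3 := hchen s u t has hsu hut.le htb
    have hm1 : ω₁ s u ^ α₁ ≤ σ ^ α₁ :=
      Real.rpow_le_rpow (hω₁.2.1 s u has hsu (hut.le.trans htb)) (hσle u hsu hut) h₁.le
    have hm2 : ω₂ s u ^ α₂ ≤ ω₂ s t ^ α₂ :=
      Real.rpow_le_rpow (hω₂.2.1 s u has hsu (hut.le.trans htb))
        (hω₂.2.2.1 s s u t has le_rfl hsu hut.le htb) h₂.le
    have hm3 : ω₁ u t ^ α₁ ≤ ω₁ s t ^ α₁ :=
      Real.rpow_le_rpow (hω₁.2.1 u t (has.trans hsu) hut.le htb)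
        (hω₁.2.2.1 s u t t has hsu hut.le le_rfl htb) h₁.le
    have nσ : 0 ≤ σ ^ α₁ := Real.rpow_nonneg hσ0 _
    have nω₂st : 0 ≤ ω₂ s t ^ α₂ := Real.rpow_nonneg hω₂nn _
    have nω₁su : 0 ≤ ω₁ s u ^ α₁ := Real.rpow_nonneg (hω₁.2.1 s u has hsu (hut.le.trans htb)) _
    have nω₂su : 0 ≤ ω₂ s u ^ α₂ :=
      Real.rpow_nonneg (hω₂.2.1 s u has hsu (hut.le.trans htb)) _
    have nω₁ut : 0 ≤ ω₁ u t ^ α₁ := Real.rpow_nonneg (hω₁.2.1 u t (has.trans hsu) hut.le htb) _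
    have nω₂ut : 0 ≤ ω₂ u t ^ α₂ := Real.rpow_nonneg hω₂utnn _
    calc ‖I₁ + I₂ - μ s t‖
        = ‖(I₁ - μ s u) + (I₂ - μ u t) + -(μ s t - μ s u - μ u t)‖ := by congr 1; abel
      _ ≤ ‖(I₁ - μ s u) + (I₂ - μ u t)‖ + ‖-(μ s t - μ s u - μ u t)‖ := norm_add_le _ _
      _ ≤ ‖I₁ - μ s u‖ + ‖I₂ - μ u t‖ + ‖μ s t - μ s u - μ u t‖ := by
          rw [norm_neg]
          exact add_le_add_left (norm_add_le _ _) _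
      _ ≤ C₀ * (ω₁ s u ^ α₁ * ω₂ s u ^ α₂) + C₀ * (ω₁ u t ^ α₁ * ω₂ u t ^ α₂)
          + ω₁ s u ^ α₁ * ω₂ u t ^ α₂ := add_le_add (add_le_add hI₁b hI₂b) hchen3
      _ ≤ C₀ * (σ ^ α₁ * ω₂ s t ^ α₂) + C₀ * (ω₁ s t ^ α₁ * τ) + σ ^ α₁ * τ := by
          refine add_le_add (add_le_add ?_ ?_) ?_
          · exact mul_le_mul_of_nonneg_left (mul_le_mul hm1 hm2 nω₂su nσ) hC₀.le
          · exact mul_le_mul_of_nonneg_left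
              (mul_le_mul hm3 hω₂utα nω₂ut (Real.rpow_nonneg hω₁nn _)) hC₀.le
          · exact mul_le_mul hm1 hω₂utα nω₂ut nσ
      _ = C₀ * σ ^ α₁ * ω₂ s t ^ α₂ + (C₀ * ω₁ s t ^ α₁ + σ ^ α₁) * τ := by ring
      _ ≤ C₀ * σ ^ α₁ * ω₂ s t ^ α₂ + ε := by
          have hle : (C₀ * ω₁ s t ^ α₁ + σ ^ α₁) * τ ≤ D * τ := by
            refine mul_le_mul_of_nonneg_right ?_ hτ.le
            rw [hDdef]; linarith
          have hDτ : D * τ = ε := by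
            rw [hτdef]; field_simp
          linarith
end
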